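/- arXiv:2010.08664 — 3 statements merged into one kernel-verified Lean document; each statement's English description precedes it below -/
import Mathlib

section
/- A simple digraph G is a proper circular-arc catch digraph if and only if its augmented adjacency matrix can, after independent permutations of rows and columns, be transformed into a matrix B such that: (1) B satisfies circular ones property along both rows and columns; (2) for every two rows r, s of B, the difference r − s of their circular one-blocks is a circular interval; and (3) for every full row r and every two nontrivial rows s, t, the set r − s − t is a circular interval. -/
/-- Membership in the closed clockwise circular arc starting at `a` of length `ℓ`
on a circle of circumference 1 (points are reals modulo 1). -/
def arcMem (a ℓ x : ℝ) : Prop := Int.fract (x - a) ≤ ℓ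

/-- The set of points of the circle (reals, modulo 1) lying on the arc. -/
def arcSet (a ℓ : ℝ) : Set ℝ := {x | arcMem a ℓ x}

/-- `E` is a circular-arc catch digraph: each vertex `v` carries a circular arc
(start `a v`, length `ℓ v`) and a point `p v` inside its own arc, and
`E u v` iff `u ≠ v` and the point of `v` lies in the arc of `u`. -/
def IsCACatchDigraph {V : Type*} (E : V → V → Prop) : Prop :=
  ∃ a ℓ p : V → ℝ, (∀ v, arcMem (a v) (ℓ v) (p v)) ∧
    ∀ u v, E u v ↔ u ≠ v ∧ arcMem (a u) (ℓ u) (p v)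

/-- Proper circular-arc catch digraph: as above, with no arc properly contained
in another. -/
def IsProperCACatchDigraph {V : Type*} (E : V → V → Prop) : Prop :=
  ∃ a ℓ p : V → ℝ, (∀ v, arcMem (a v) (ℓ v) (p v)) ∧
    (∀ u v : V, ¬ arcSet (a u) (ℓ u) ⊂ arcSet (a v) (ℓ v)) ∧
    ∀ u v, E u v ↔ u ≠ v ∧ arcMem (a u) (ℓ u) (p v)

/-- A digraph is oriented: no pair of vertices has edges in both directions. -/
def Oriented {V : Type*} (E : V → V → Prop) : Prop := ∀ u v, E u v → ¬ E v u

/-- A subset of `Fin n` is a circular (cyclically consecutive) block. -/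
def CircBlock {n : ℕ} (S : Set (Fin n)) : Prop :=
  S = ∅ ∨ ∃ a b : Fin n, S = {i | i - a ≤ b - a}


/-- The augmented adjacency matrix of a digraph, with rows and columns
independently permuted. -/
def AugM {V : Type*} {n : ℕ} (E : V → V → Prop) (ρ γ : Fin n ≃ V)
    (i j : Fin n) : Prop :=
  E (ρ i) (γ j) ∨ ρ i = γ j

/-- The three matrix conditions: circular ones along rows and columns; the
difference of the one-blocks of any two rows is a circular interval; and for
any full row r and nontrivial rows s, t the set r - s - t is a circular
interval. -/
def MatCond {n : ℕ} (B : Fin n → Fin n → Prop) : Prop :=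
  (∀ i, CircBlock {j | B i j}) ∧
  (∀ j, CircBlock {i | B i j}) ∧
  (∀ r s, CircBlock {j | B r j ∧ ¬ B s j}) ∧
  (∀ r s t, (∀ j, B r j) →
     (∃ j, B s j) → (∃ j, ¬ B s j) → (∃ j, B t j) → (∃ j, ¬ B t j) →
     CircBlock {j | B r j ∧ ¬ B s j ∧ ¬ B t j})



namespace CB


lemma subval {n : ℕ} (a b : Fin n) :
    (a - b).val = if b.val ≤ a.val then a.val - b.val else a.val + n - b.val := by
  rw [Fin.sub_def]
  rcases n with _ | m
  · exact a.elim0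
  simp only
  split_ifs with h
  · rcases Nat.le.dest h with ⟨k, hk⟩
    have hb : b.val < m + 1 := b.isLt
    have : (m + 1) - b.val + a.val = (m+1) + k := by omega
    rw [this, Nat.add_mod_left, Nat.mod_eq_of_lt (by omega)]
    omega
  · have hb : b.val < m + 1 := b.isLt
    have ha : a.val < m + 1 := a.isLt
    rw [Nat.mod_eq_of_lt (by omega)]
    omega

lemma mem_iff {n : ℕ} (a b i : Fin n) :
    (i - a ≤ b - a) ↔
    ((if a.val ≤ i.val then i.val - a.val else i.val + n - a.val) ≤
     (if a.val ≤ b.val then b.val - a.val else b.val + n - a.val)) := by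
  rw [Fin.le_def, subval, subval]

/-- `univ` is a circular block. -/
lemma univ {n : ℕ} : CircBlock (Set.univ : Set (Fin n)) := by
  rcases n with _ | m
  · left; ext i; exact i.elim0
  · right
    refine ⟨0, Fin.last m, ?_⟩
    ext i
    simp only [Set.mem_univ, Set.mem_setOf_eq, true_iff, sub_zero]
    exact Fin.le_last i

lemma empty {n : ℕ} : CircBlock (∅ : Set (Fin n)) := Or.inl rfl

/-- complement of a block is a block -/
lemma compl {n : ℕ} {S : Set (Fin n)} (h : CircBlock S) : CircBlock Sᶜ := by
  rcases n with _ | m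
  · left; ext i; exact i.elim0
  rcases h with h | ⟨a, b, rfl⟩
  · subst h; simpa using univ
  by_cases hfull : (b - a).val = m
  · left
    ext i
    simp only [Set.mem_compl_iff, Set.mem_setOf_eq, Set.mem_empty_iff_false, iff_false, not_not]
    rw [Fin.le_def, hfull]
    omega
  · right
    have hm : 0 < m := by
      by_contra hm
      have hy := (b - a).isLt
      omega
    rw [subval] at hfull
    refine ⟨⟨(b.val+1) % (m+1), Nat.mod_lt _ (by omega)⟩, ⟨(a.val + m) % (m+1), Nat.mod_lt _ (by omega)⟩, ?_⟩
    have ha := a.isLt; have hb := b.isLt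
    have hc : (b.val+1) % (m+1) = if b.val = m then 0 else b.val + 1 := by
      split_ifs with h'
      · rw [h']; simp
      · exact Nat.mod_eq_of_lt (by omega)
    have hd : (a.val + m) % (m+1) = if a.val = 0 then m else a.val - 1 := by
      split_ifs with h'
      · rw [h', Nat.zero_add]; exact Nat.mod_eq_of_lt (by omega)
      · have h2 : a.val + m = (m+1) + (a.val - 1) := by omega
        rw [h2, Nat.add_mod_left]
        exact Nat.mod_eq_of_lt (by omega)
    ext i
    have hi := i.isLt
    simp only [Set.mem_compl_iff, Set.mem_setOf_eq]
    rw [mem_iff, mem_iff]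
    simp only [Fin.val_mk] -- vals of mk
    rw [hc, hd]
    split_ifs at hfull ⊢ <;> omega

/-- linear interval from min/max: an order-convex set is a block -/
lemma of_convex {n : ℕ} {S : Set (Fin n)}
    (h : ∀ x y z : Fin n, x ∈ S → z ∈ S → x ≤ y → y ≤ z → y ∈ S) : CircBlock S := by
  rcases Set.eq_empty_or_nonempty S with he | hne
  · exact Or.inl he
  obtain ⟨a, ha, hamin⟩ := Set.exists_min_image S id (Set.toFinite S) hne
  obtain ⟨b, hb, hbmax⟩ := Set.exists_max_image S id (Set.toFinite S) hne
  right
  refine ⟨a, b, ?_⟩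
  ext i
  simp only [Set.mem_setOf_eq]
  constructor
  · intro hi
    rw [mem_iff]
    have h1 : a.val ≤ i.val := hamin i hi
    have h2 : i.val ≤ b.val := hbmax i hi
    have h3 : a.val ≤ b.val := le_trans h1 h2
    split_ifs <;> omega
  · intro hi
    rw [mem_iff] at hi
    have h3 : a.val ≤ b.val := hamin b hb
    refine h a i b ha hb ?_ ?_ <;> rw [Fin.le_def] <;>
      · split_ifs at hi <;> omega

/-- prefix ∪ suffix is a block -/
lemma of_wrap {n : ℕ} (a b : Fin n) : CircBlock {i : Fin n | i ≤ b ∨ a ≤ i} := by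
  rcases le_or_gt a b with h | h
  · have : {i : Fin n | i ≤ b ∨ a ≤ i} = Set.univ := by
      ext i
      simp only [Set.mem_setOf_eq, Set.mem_univ, iff_true]
      rw [Fin.le_def, Fin.le_def]
      rw [Fin.le_def] at h
      omega
    rw [this]; exact univ
  · right
    refine ⟨a, b, ?_⟩
    ext i
    have hi := i.isLt
    simp only [Set.mem_setOf_eq]
    rw [Fin.le_def, Fin.le_def, mem_iff]
    rw [Fin.lt_def] at h
    split_ifs <;> omega

/-- dichotomy: a block containing u and w contains one of the two arcs between them -/
lemma dichotomy {n : ℕ} {S : Set (Fin n)} (h : CircBlock S) {u w : Fin n}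
    (hu : u ∈ S) (hw : w ∈ S) :
    (∀ z : Fin n, z - u ≤ w - u → z ∈ S) ∨ (∀ z : Fin n, z - w ≤ u - w → z ∈ S) := by
  rcases h with h | ⟨a, b, rfl⟩
  · subst h; exact absurd hu (by simp)
  simp only [Set.mem_setOf_eq] at hu hw ⊢
  rw [mem_iff] at hu hw
  rcases le_or_gt ((u - a).val) ((w - a).val) with hcmp | hcmp
  · left
    intro z hz
    rw [mem_iff]
    rw [Fin.le_def, subval, subval] at hz
    rw [subval, subval] at hcmp
    have := a.isLt; have := u.isLt; have := w.isLt; have := z.isLt; have := b.isLt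
    split_ifs at hu hw hz hcmp ⊢ <;> omega
  · right
    intro z hz
    rw [mem_iff]
    rw [Fin.le_def, subval, subval] at hz
    rw [subval, subval] at hcmp
    have := a.isLt; have := u.isLt; have := w.isLt; have := z.isLt; have := b.isLt
    split_ifs at hu hw hz hcmp ⊢ <;> omega


end CB
namespace CB

lemma fract_cases (x c : ℝ) (hx0 : 0 ≤ x) (hx1 : x < 1) (hc0 : 0 ≤ c) (hc1 : c < 1) :
    (c ≤ x ∧ Int.fract (x - c) = x - c) ∨ (x < c ∧ Int.fract (x - c) = x - c + 1) := by
  rcases le_or_gt c x with h | h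
  · left
    exact ⟨h, Int.fract_eq_self.mpr ⟨by linarith, by linarith⟩⟩
  · right
    refine ⟨h, ?_⟩
    have h1 : Int.fract (x - c) = Int.fract (x - c + 1) := by
      have := Int.fract_add_intCast (x - c) 1
      push_cast at this
      linarith [this]
    rw [h1]
    exact Int.fract_eq_self.mpr ⟨by linarith, by linarith⟩

lemma master_aux {n : ℕ} (u : Fin n → ℝ) (hu : Monotone u)
    (h0 : ∀ j, 0 ≤ u j) (h1 : ∀ j, u j < 1)
    (c : ℝ) (hc0 : 0 ≤ c) (hc1 : c < 1) (J : Set ℝ) (hJ : J.OrdConnected) :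
    CircBlock {j | Int.fract (u j - c) ∈ J} := by
  set S := {j | Int.fract (u j - c) ∈ J} with hS
  have key : ∀ j, j ∈ S ↔ ((c ≤ u j ∧ u j - c ∈ J) ∨ (u j < c ∧ u j - c + 1 ∈ J)) := by
    intro j
    rcases fract_cases (u j) c (h0 j) (h1 j) hc0 hc1 with ⟨h, he⟩ | ⟨h, he⟩
    · simp only [hS, Set.mem_setOf_eq, he]
      constructor
      · intro hj; exact Or.inl ⟨h, hj⟩
      · rintro (⟨_, hj⟩ | ⟨h', _⟩)
        · exact hj
        · linarith
    · simp only [hS, Set.mem_setOf_eq, he]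
      constructor
      · intro hj; exact Or.inr ⟨h, hj⟩
      · rintro (⟨h', _⟩ | ⟨_, hj⟩)
        · linarith
        · exact hj
  by_cases hP1 : ∃ j : Fin n, c ≤ u j ∧ u j - c ∈ J
  · by_cases hP2 : ∃ j : Fin n, u j < c ∧ u j - c + 1 ∈ J
    · -- both nonempty : S = wrap interval
      have hfin : (Set.univ : Set (Fin n)).Finite := Set.finite_univ
      obtain ⟨j₁, hj₁, hj₁min⟩ := Set.exists_min_image {j : Fin n | c ≤ u j ∧ u j - c ∈ J} id
        (Set.toFinite _) hP1
      obtain ⟨j₂, hj₂, hj₂max⟩ := Set.exists_max_image {j : Fin n | u j < c ∧ u j - c + 1 ∈ J} id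
        (Set.toFinite _) hP2
      have hSeq : S = {j : Fin n | j ≤ j₂ ∨ j₁ ≤ j} := by
        ext j
        rw [key j]
        simp only [Set.mem_setOf_eq]
        constructor
        · rintro (hj | hj)
          · exact Or.inr (hj₁min j hj)
          · exact Or.inl (hj₂max j hj)
        · rintro (hj | hj)
          · right
            have hle : u j ≤ u j₂ := hu hj
            refine ⟨lt_of_le_of_lt hle hj₂.1, ?_⟩
            have := hJ.out hj₁.2 hj₂.2
            refine this ⟨by linarith [h1 j₁, h0 j], by linarith⟩
          · left
            have hle : u j₁ ≤ u j := hu hj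
            refine ⟨le_trans hj₁.1 hle, ?_⟩
            have := hJ.out hj₁.2 hj₂.2
            refine this ⟨by linarith, by linarith [h1 j, h0 j₂]⟩
      rw [hSeq]
      exact of_wrap j₁ j₂
    · -- only P1
      apply of_convex
      intro x y z hx hz hxy hyz
      rw [key] at hx hz ⊢
      have hx' : c ≤ u x ∧ u x - c ∈ J := by
        rcases hx with h | h
        · exact h
        · exact absurd ⟨x, h⟩ hP2
      have hz' : c ≤ u z ∧ u z - c ∈ J := by
        rcases hz with h | h
        · exact h
        · exact absurd ⟨z, h⟩ hP2
      left
      refine ⟨le_trans hx'.1 (hu hxy), ?_⟩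
      exact hJ.out hx'.2 hz'.2 ⟨by linarith [(hu hxy : u x ≤ u y)], by linarith [(hu hyz : u y ≤ u z)]⟩
  · by_cases hP2 : ∃ j : Fin n, u j < c ∧ u j - c + 1 ∈ J
    · apply of_convex
      intro x y z hx hz hxy hyz
      rw [key] at hx hz ⊢
      have hx' : u x < c ∧ u x - c + 1 ∈ J := by
        rcases hx with h | h
        · exact absurd ⟨x, h⟩ hP1
        · exact h
      have hz' : u z < c ∧ u z - c + 1 ∈ J := by
        rcases hz with h | h
        · exact absurd ⟨z, h⟩ hP1
        · exact h
      right
      refine ⟨lt_of_le_of_lt (hu hyz) hz'.1, ?_⟩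
      exact hJ.out hx'.2 hz'.2 ⟨by linarith [(hu hxy : u x ≤ u y)], by linarith [(hu hyz : u y ≤ u z)]⟩
    · left
      ext j
      rw [Set.mem_empty_iff_false, iff_false, key]
      rintro (h | h)
      · exact hP1 ⟨j, h⟩
      · exact hP2 ⟨j, h⟩

/-- the general master lemma, c arbitrary -/
lemma master {n : ℕ} (u : Fin n → ℝ) (hu : Monotone u)
    (h0 : ∀ j, 0 ≤ u j) (h1 : ∀ j, u j < 1)
    (c : ℝ) (J : Set ℝ) (hJ : J.OrdConnected) :
    CircBlock {j | Int.fract (u j - c) ∈ J} := by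
  have he : ∀ x : ℝ, Int.fract (x - c) = Int.fract (x - Int.fract c) := by
    intro x
    have : x - c = x - Int.fract c - (⌊c⌋ : ℤ) := by
      rw [Int.fract]; push_cast; ring
    rw [this, Int.fract_sub_intCast]
  have : {j | Int.fract (u j - c) ∈ J} = {j | Int.fract (u j - Int.fract c) ∈ J} := by
    ext j
    simp only [Set.mem_setOf_eq]
    rw [he]
  rw [this]
  exact master_aux u hu h0 h1 _ (Int.fract_nonneg c) (Int.fract_lt_one c) J hJ


end CB
namespace CB

lemma fract_shift (x y : ℝ) (k : ℤ) (h : x - y = k) : Int.fract x = Int.fract y := by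
  have : x = y + k := by linarith
  rw [this, Int.fract_add_intCast]

lemma fract_of_neg {x : ℝ} (h0 : -1 ≤ x) (h1 : x < 0) : Int.fract x = x + 1 := by
  have : Int.fract x = Int.fract (x + 1) := by
    have := Int.fract_add_intCast x 1
    push_cast at this
    rw [this]
  rw [this]
  exact Int.fract_eq_self.mpr ⟨by linarith, by linarith⟩

/-- symmetry identity for arcs -/
lemma fract_sym (t M : ℝ) (h0 : 0 ≤ M) (h1 : M < 1) :
    Int.fract t ≤ M ↔ Int.fract (M - t) ≤ M := by
  have e : Int.fract (M - t) = Int.fract (M - Int.fract t) :=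
    (fract_shift _ _ (⌊t⌋) (by rw [Int.fract]; ring)).symm
  rcases le_or_gt (Int.fract t) M with h | h
  · have : Int.fract (M - Int.fract t) = M - Int.fract t :=
      Int.fract_eq_self.mpr ⟨by linarith, by linarith [Int.fract_nonneg t]⟩
    rw [e, this]
    constructor
    · intro _; linarith [Int.fract_nonneg t]
    · intro _; exact h
  · have hlt1 := Int.fract_lt_one t
    have : Int.fract (M - Int.fract t) = M - Int.fract t + 1 :=
      fract_of_neg (by linarith) (by linarith)
    rw [e, this]
    constructor
    · intro h'; linarith
    · intro h'; linarith
  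
/-- the cond-3 window equivalence -/
lemma c3equiv (w d Ls Lr : ℝ) (hw0 : 0 ≤ w) (hw1 : w < 1) (hd0 : 0 ≤ d) (hd1 : d < 1)
    (hlt : Lr < d + Ls) :
    (w ≤ Lr ∧ ¬ (Int.fract (w - d) ≤ Ls)) ↔ (w ∈ Set.Icc 0 Lr ∩ Set.Ioo (d + Ls - 1) d) := by
  constructor
  · rintro ⟨h1, h2⟩
    rcases le_or_gt d w with h | h
    · exfalso
      have : Int.fract (w - d) = w - d := Int.fract_eq_self.mpr ⟨by linarith, by linarith⟩
      rw [this] at h2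
      have : w - d > Ls := lt_of_not_ge h2
      linarith
    · have : Int.fract (w - d) = w - d + 1 := fract_of_neg (by linarith) (by linarith)
      rw [this] at h2
      have : w - d + 1 > Ls := lt_of_not_ge h2
      exact ⟨⟨hw0, h1⟩, by constructor <;> linarith⟩
  · rintro ⟨⟨_, h1⟩, h2, h3⟩
    refine ⟨h1, ?_⟩
    have : Int.fract (w - d) = w - d + 1 := fract_of_neg (by linarith) (by linarith)
    rw [this]
    intro hc
    linarith

theorem forward {V : Type*} [Fintype V] (E : V → V → Prop)
    (hirr : ∀ v, ¬ E v v) (H : IsProperCACatchDigraph E) :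
    ∃ ρ γ : Fin (Fintype.card V) ≃ V, MatCond (AugM E ρ γ) := by
  obtain ⟨a, l, p, hp, hproper, hE⟩ := H
  set n := Fintype.card V
  have hl0 : ∀ v, 0 ≤ l v := fun v => le_trans (Int.fract_nonneg _) (hp v)
  by_cases hfull : ∃ v, 1 ≤ l v
  · -- complete digraph case
    obtain ⟨v₀, hv₀⟩ := hfull
    have hall : ∀ u x, arcMem (a u) (l u) x := by
      intro u x
      have huniv : arcSet (a v₀) (l v₀) = Set.univ := by
        ext y
        simp only [arcSet, arcMem, Set.mem_setOf_eq, Set.mem_univ, iff_true]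
        linarith [Int.fract_lt_one (y - a v₀)]
      have hsub : arcSet (a u) (l u) ⊆ arcSet (a v₀) (l v₀) := by
        rw [huniv]; exact Set.subset_univ _
      have : arcSet (a u) (l u) = arcSet (a v₀) (l v₀) := by
        by_contra hne
        exact hproper u v₀ (ssubset_of_subset_of_ne hsub hne)
      have : x ∈ arcSet (a u) (l u) := by
        rw [this, huniv]; trivial
      exact this
    refine ⟨(Fintype.equivFin V).symm, (Fintype.equivFin V).symm, ?_, ?_, ?_, ?_⟩
    · intro i
      have : {j | AugM E (Fintype.equivFin V).symm (Fintype.equivFin V).symm i j} = Set.univ := by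
        ext j
        simp only [AugM, Set.mem_setOf_eq, Set.mem_univ, iff_true]
        by_cases h : (Fintype.equivFin V).symm i = (Fintype.equivFin V).symm j
        · exact Or.inr h
        · exact Or.inl ((hE _ _).mpr ⟨h, hall _ _⟩)
      rw [this]; exact CB.univ
    · intro j
      have : {i | AugM E (Fintype.equivFin V).symm (Fintype.equivFin V).symm i j} = Set.univ := by
        ext i
        simp only [AugM, Set.mem_setOf_eq, Set.mem_univ, iff_true]
        by_cases h : (Fintype.equivFin V).symm i = (Fintype.equivFin V).symm j
        · exact Or.inr h
        · exact Or.inl ((hE _ _).mpr ⟨h, hall _ _⟩)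
      rw [this]; exact CB.univ
    · intro r s
      have : {j | AugM E (Fintype.equivFin V).symm (Fintype.equivFin V).symm r j ∧
          ¬ AugM E (Fintype.equivFin V).symm (Fintype.equivFin V).symm s j} = ∅ := by
        ext j
        simp only [AugM, Set.mem_setOf_eq, Set.mem_empty_iff_false, iff_false, not_and, not_not]
        intro _
        by_cases h : (Fintype.equivFin V).symm s = (Fintype.equivFin V).symm j
        · exact Or.inr h
        · exact Or.inl ((hE _ _).mpr ⟨h, hall _ _⟩)
      rw [this]; exact CB.empty
    · intro r s t _ _ hs2 _ _
      exfalso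
      obtain ⟨j, hj⟩ := hs2
      apply hj
      by_cases h : (Fintype.equivFin V).symm s = (Fintype.equivFin V).symm j
      · exact Or.inr h
      · exact Or.inl ((hE _ _).mpr ⟨h, hall _ _⟩)
  · -- proper arcs case
    push_neg at hfull
    have hl1 : ∀ v, l v < 1 := hfull
    -- key numeric properness
    have hkey : ∀ u v : V, Int.fract (a u - a v) + l u ≤ l v →
        Int.fract (a u - a v) = 0 ∧ l u = l v := by
      intro u v hyp
      set d := Int.fract (a u - a v) with hd
      have hd0 : 0 ≤ d := Int.fract_nonneg _
      have hd1 : d < 1 := Int.fract_lt_one _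
      -- subset
      have hsub : arcSet (a u) (l u) ⊆ arcSet (a v) (l v) := by
        intro x hx
        simp only [arcSet, arcMem, Set.mem_setOf_eq] at hx ⊢
        have e1 : Int.fract (x - a v) = Int.fract (Int.fract (x - a u) + d) := by
          apply fract_shift
          · show (x - a v) - _ = ((⌊x - a u⌋ + ⌊a u - a v⌋ : ℤ) : ℝ)
            rw [hd]
            simp only [Int.fract]
            push_cast
            ring
        have e2 : Int.fract (Int.fract (x - a u) + d) = Int.fract (x - a u) + d := by
          apply Int.fract_eq_self.mpr
          constructor
          · have := Int.fract_nonneg (x - a u); linarith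
          · have := hl0 u
            calc Int.fract (x - a u) + d ≤ l u + d := by linarith
            _ ≤ l v := by linarith
            _ < 1 := hl1 v
        rw [e1, e2]
        linarith
      have heq : arcSet (a u) (l u) = arcSet (a v) (l v) := by
        by_contra hne
        exact hproper u v (ssubset_of_subset_of_ne hsub hne)
      -- derive l v = d + l u
      have hmem1 : (a v + l v) ∈ arcSet (a v) (l v) := by
        simp only [arcSet, arcMem, Set.mem_setOf_eq, add_sub_cancel_left]
        rw [Int.fract_eq_self.mpr ⟨hl0 v, hl1 v⟩]
      rw [← heq] at hmem1
      simp only [arcSet, arcMem, Set.mem_setOf_eq] at hmem1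
      have e3 : Int.fract (a v + l v - a u) = l v - d := by
        have e4 : Int.fract (a v + l v - a u) = Int.fract (l v - d) := by
          apply fract_shift
          · show _ - _ = ((-⌊a u - a v⌋ : ℤ) : ℝ)
            rw [hd]; simp only [Int.fract]; push_cast; ring
        rw [e4]
        apply Int.fract_eq_self.mpr
        constructor
        · linarith [hl0 u]
        · linarith [hl1 v]
      rw [e3] at hmem1
      have hlv : l v = d + l u := by linarith
      rcases eq_or_lt_of_le hd0 with h0 | h0
      · exact ⟨h0.symm, by linarith⟩
      · exfalso
        have hmem2 : (a v + d/2) ∈ arcSet (a v) (l v) := by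
          simp only [arcSet, arcMem, Set.mem_setOf_eq, add_sub_cancel_left]
          rw [Int.fract_eq_self.mpr ⟨by linarith, by linarith⟩]
          linarith [hl0 u]
        rw [← heq] at hmem2
        simp only [arcSet, arcMem, Set.mem_setOf_eq] at hmem2
        have e5 : Int.fract (a v + d/2 - a u) = 1 - d/2 := by
          have e6 : Int.fract (a v + d/2 - a u) = Int.fract (-d/2) := by
            apply fract_shift
            · show _ - _ = ((-⌊a u - a v⌋ : ℤ) : ℝ)
              rw [hd]; simp only [Int.fract]; push_cast; ring
          rw [e6]
          rw [fract_of_neg (by linarith) (by linarith)]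
          ring
        rw [e5] at hmem2
        linarith [hl1 v]
    -- permutations
    set e₀ : Fin n ≃ V := (Fintype.equivFin V).symm with he₀
    set γ : Fin n ≃ V := ((Tuple.sort (fun j => Int.fract (p (e₀ j)))).trans e₀ : Fin n ≃ V) with hγ
    set ρ : Fin n ≃ V := ((Tuple.sort (fun i => Int.fract (a (e₀ i)))).trans e₀ : Fin n ≃ V) with hρ
    set Q : Fin n → ℝ := fun j => Int.fract (p (γ j)) with hQ
    set A : Fin n → ℝ := fun i => a (ρ i) with hA
    set L : Fin n → ℝ := fun i => l (ρ i) with hL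
    set U : Fin n → ℝ := fun i => Int.fract (A i) with hU
    have hQmono : Monotone Q := by
      have := Tuple.monotone_sort (fun j => Int.fract (p (e₀ j)))
      intro x y hxy
      exact this hxy
    have hUmono : Monotone U := by
      have := Tuple.monotone_sort (fun i => Int.fract (a (e₀ i)))
      intro x y hxy
      exact this hxy
    have hQ0 : ∀ j, 0 ≤ Q j := fun j => Int.fract_nonneg _
    have hQ1 : ∀ j, Q j < 1 := fun j => Int.fract_lt_one _
    have hU0 : ∀ i, 0 ≤ U i := fun i => Int.fract_nonneg _
    have hU1 : ∀ i, U i < 1 := fun i => Int.fract_lt_one _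
    -- B iff
    have hfr : ∀ i j, Int.fract (p (γ j) - A i) = Int.fract (Q j - A i) := by
      intro i j
      apply fract_shift
      show _ - _ = ((⌊p (γ j)⌋ : ℤ) : ℝ)
      simp only [hQ, Int.fract]
      ring
    have hBiff : ∀ i j, AugM E ρ γ i j ↔ Int.fract (Q j - A i) ≤ L i := by
      intro i j
      constructor
      · rintro (h | h)
        · rw [← hfr]
          exact ((hE _ _).mp h).2
        · rw [← hfr]
          show Int.fract (p (γ j) - a (ρ i)) ≤ l (ρ i)
          rw [h]
          exact hp (γ j)
      · intro h
        by_cases hv : ρ i = γ j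
        · exact Or.inr hv
        · refine Or.inl ((hE _ _).mpr ⟨hv, ?_⟩)
          show Int.fract (p (γ j) - a (ρ i)) ≤ l (ρ i)
          rw [hfr]
          exact h
    refine ⟨ρ, γ, ?_, ?_, ?_, ?_⟩
    · -- rows
      intro i
      have : {j | AugM E ρ γ i j} = {j | Int.fract (Q j - A i) ∈ Set.Iic (L i)} := by
        ext j; simp only [Set.mem_setOf_eq, Set.mem_Iic]; exact hBiff i j
      rw [this]
      exact CB.master Q hQmono hQ0 hQ1 (A i) _ Set.ordConnected_Iic
    · -- columns
      intro j
      set f : Fin n → ℝ := fun i => Int.fract (Q j - A i) with hf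
      set C : Set (Fin n) := {i | AugM E ρ γ i j} with hC
      have hmemC : ∀ i, i ∈ C ↔ f i ≤ L i := fun i => hBiff i j
      have hdc : ∀ i i', i ∈ C → f i' ≤ f i → i' ∈ C := by
        intro i i' hi hle
        rw [hmemC] at hi ⊢
        have hd' : Int.fract (A i' - A i) = f i - f i' := by
          have e1 : Int.fract (A i' - A i) = Int.fract (f i - f i') := by
            apply fract_shift
            show _ - _ = ((⌊Q j - A i⌋ - ⌊Q j - A i'⌋ : ℤ) : ℝ)
            simp only [hf, Int.fract]
            push_cast
            ring
          rw [e1]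
          apply Int.fract_eq_self.mpr
          constructor
          · linarith
          · have h1 : f i < 1 := Int.fract_lt_one _
            have h2 : 0 ≤ f i' := Int.fract_nonneg _
            linarith
        by_cases hcase : Int.fract (A (i') - A i) + L i' ≤ L i
        · obtain ⟨hz, hleq⟩ := hkey (ρ i') (ρ i) hcase
          rw [hd'] at hz
          have heq2 : f i' = f i := by linarith
          have hleq' : L i' = L i := hleq
          rw [heq2, hleq']
          exact hi
        · push_neg at hcase
          rw [hd'] at hcase
          linarith
      have hCne : C.Nonempty := by
        refine ⟨ρ.symm (γ j), ?_⟩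
        show AugM E ρ γ (ρ.symm (γ j)) j
        exact Or.inr (ρ.apply_symm_apply _)
      obtain ⟨i₀, hi₀C, hi₀max⟩ := Set.exists_max_image C f (Set.toFinite _) hCne
      set M := f i₀ with hM
      have hM0 : 0 ≤ M := Int.fract_nonneg _
      have hM1 : M < 1 := Int.fract_lt_one _
      have hCeq : C = {i | Int.fract (U i - (Q j - M)) ∈ Set.Iic M} := by
        ext i
        simp only [Set.mem_setOf_eq, Set.mem_Iic]
        have e1 : Int.fract (U i - (Q j - M)) = Int.fract (M - (Q j - A i)) := by
          apply fract_shift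
          show _ - _ = ((-⌊A i⌋ : ℤ) : ℝ)
          simp only [hU, Int.fract]
          push_cast
          ring
        rw [e1, ← fract_sym (Q j - A i) M hM0 hM1]
        constructor
        · intro hi
          exact hi₀max i hi
        · intro hle
          exact hdc i₀ i hi₀C hle
      rw [hCeq]
      exact CB.master U hUmono hU0 hU1 _ _ Set.ordConnected_Iic
    · -- cond 3
      intro r s
      set d := Int.fract (A s - A r) with hd
      by_cases hcase : d + L s ≤ L r
      · obtain ⟨hz, hleq⟩ := hkey (ρ s) (ρ r) hcase
        have hsame : ∀ j, Int.fract (Q j - A s) = Int.fract (Q j - A r) := by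
          intro j
          apply fract_shift
          show _ - _ = ((-⌊A s - A r⌋ : ℤ) : ℝ)
          have : A s - A r = (⌊A s - A r⌋ : ℝ) := by
            have := hz
            simp only [hd, Int.fract] at this
            linarith
          push_cast
          linarith
        have : {j | AugM E ρ γ r j ∧ ¬ AugM E ρ γ s j} = ∅ := by
          ext j
          simp only [Set.mem_setOf_eq, Set.mem_empty_iff_false, iff_false, not_and, not_not]
          intro hr
          rw [hBiff] at hr ⊢
          have hleq' : L s = L r := hleq
          rw [hsame j, hleq']
          exact hr
        rw [this]
        exact CB.empty
      · push_neg at hcase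
        have hd0 : 0 ≤ d := Int.fract_nonneg _
        have hd1 : d < 1 := Int.fract_lt_one _
        have : {j | AugM E ρ γ r j ∧ ¬ AugM E ρ γ s j} =
            {j | Int.fract (Q j - A r) ∈ Set.Icc 0 (L r) ∩ Set.Ioo (d + L s - 1) d} := by
          ext j
          simp only [Set.mem_setOf_eq]
          rw [hBiff, hBiff]
          have efr : Int.fract (Q j - A s) = Int.fract (Int.fract (Q j - A r) - d) := by
            apply fract_shift
            show _ - _ = ((⌊Q j - A r⌋ - ⌊A s - A r⌋ : ℤ) : ℝ)
            simp only [hd, Int.fract]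
            push_cast
            ring
          rw [efr]
          exact c3equiv (Int.fract (Q j - A r)) d (L s) (L r)
            (Int.fract_nonneg _) (Int.fract_lt_one _) hd0 hd1 hcase
        rw [this]
        exact CB.master Q hQmono hQ0 hQ1 _ _
          (Set.ordConnected_Icc.inter Set.ordConnected_Ioo)
    · -- cond 4
      intro r s t hr hs1 hs2 ht1 ht2
      have hnc : ∀ x : Fin n, (∃ j, ¬ AugM E ρ γ x j) →
          L r < Int.fract (A x - A r) + L x := by
        intro x hx2
        by_contra hcase
        push_neg at hcase
        obtain ⟨hz, hleq⟩ := hkey (ρ x) (ρ r) hcase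
        obtain ⟨j, hj⟩ := hx2
        apply hj
        rw [hBiff]
        have hsame : Int.fract (Q j - A x) = Int.fract (Q j - A r) := by
          apply fract_shift
          show _ - _ = ((-⌊A x - A r⌋ : ℤ) : ℝ)
          have : A x - A r = (⌊A x - A r⌋ : ℝ) := by
            simp only [Int.fract] at hz
            linarith
          push_cast
          linarith
        have hleq' : L x = L r := hleq
        rw [hsame, hleq']
        have := hr j
        rw [hBiff] at this
        exact this
      have hlts := hnc s hs2
      have hltt := hnc t ht2
      set ds := Int.fract (A s - A r) with hds
      set dt := Int.fract (A t - A r) with hdt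
      have : {j | AugM E ρ γ r j ∧ ¬ AugM E ρ γ s j ∧ ¬ AugM E ρ γ t j} =
          {j | Int.fract (Q j - A r) ∈
            (Set.Icc 0 (L r) ∩ Set.Ioo (ds + L s - 1) ds) ∩
            (Set.Icc 0 (L r) ∩ Set.Ioo (dt + L t - 1) dt)} := by
        ext j
        simp only [Set.mem_setOf_eq, Set.mem_inter_iff]
        rw [hBiff, hBiff, hBiff]
        have efrs : Int.fract (Q j - A s) = Int.fract (Int.fract (Q j - A r) - ds) := by
          apply fract_shift
          show _ - _ = ((⌊Q j - A r⌋ - ⌊A s - A r⌋ : ℤ) : ℝ)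
          simp only [hds, Int.fract]; push_cast; ring
        have efrt : Int.fract (Q j - A t) = Int.fract (Int.fract (Q j - A r) - dt) := by
          apply fract_shift
          show _ - _ = ((⌊Q j - A r⌋ - ⌊A t - A r⌋ : ℤ) : ℝ)
          simp only [hdt, Int.fract]; push_cast; ring
        rw [efrs, efrt]
        have e1 := c3equiv (Int.fract (Q j - A r)) ds (L s) (L r)
          (Int.fract_nonneg _) (Int.fract_lt_one _) (Int.fract_nonneg _) (Int.fract_lt_one _) hlts
        have e2 := c3equiv (Int.fract (Q j - A r)) dt (L t) (L r)
          (Int.fract_nonneg _) (Int.fract_lt_one _) (Int.fract_nonneg _) (Int.fract_lt_one _) hltt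
        constructor
        · rintro ⟨h1, h2, h3⟩
          exact ⟨e1.mp ⟨h1, h2⟩, e2.mp ⟨h1, h3⟩⟩
        · rintro ⟨h1, h2⟩
          obtain ⟨ha1, ha2⟩ := e1.mpr h1
          obtain ⟨_, hb2⟩ := e2.mpr h2
          exact ⟨ha1, ha2, hb2⟩
      rw [this]
      refine CB.master Q hQmono hQ0 hQ1 _ _ ?_
      exact (Set.ordConnected_Icc.inter Set.ordConnected_Ioo).inter
        (Set.ordConnected_Icc.inter Set.ordConnected_Ioo)

end CB
namespace CB

lemma one_mod {n : ℕ} (h : 2 ≤ n) : (1 : ℕ) % n = 1 := Nat.mod_eq_of_lt (by omega)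

lemma succ_ne {n : ℕ} [NeZero n] (h : 2 ≤ n) (u : Fin n) : u + 1 ≠ u := by
  intro e
  have hval := congrArg Fin.val e
  rw [Fin.add_def, Fin.val_one', one_mod h] at hval
  have hval2 : (u.val + 1) % n = u.val := hval
  have hu := u.isLt
  rcases Nat.lt_or_ge (u.val + 1) n with hh | hh
  · rw [Nat.mod_eq_of_lt hh] at hval2; omega
  · have h2 : u.val + 1 = n := by omega
    rw [h2, Nat.mod_self] at hval2; omega

set_option maxHeartbeats 3200000 in
/-- a block avoiding f₀ is an interval w.r.t. the linear order cut at f₀+1 -/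
lemma betw {n : ℕ} [NeZero n] {D : Set (Fin n)} (hD : CircBlock D) {f₀ x y z : Fin n}
    (hf : f₀ ∉ D) (hx : x ∈ D) (hz : z ∈ D)
    (h1 : (x - (f₀+1)).val ≤ (y - (f₀+1)).val)
    (h2 : (y - (f₀+1)).val ≤ (z - (f₀+1)).val) : y ∈ D := by
  rcases hD with h | ⟨c, d, rfl⟩
  · subst h; exact absurd hx (by simp)
  simp only [Set.mem_setOf_eq] at hx hz hf ⊢
  rw [mem_iff] at hx hz ⊢
  rw [mem_iff] at hf
  rw [subval, subval] at h1 h2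
  have hn : 0 < n := Nat.pos_of_ne_zero (NeZero.ne n)
  have hF1 : ((f₀ + 1 : Fin n)).val = if f₀.val = n - 1 then 0 else f₀.val + 1 := by
    rw [Fin.add_def]
    simp only [Fin.val_one']
    have hf0 := f₀.isLt
    rcases Nat.lt_or_ge 1 n with h | h
    · rw [Nat.mod_eq_of_lt h]
      split_ifs with h'
      · rw [h']
        have : n - 1 + 1 = n := by omega
        rw [this, Nat.mod_self]
      · exact Nat.mod_eq_of_lt (by omega)
    · have hn1 : n = 1 := by omega
      subst hn1
      simp only [Nat.mod_self]
      have : f₀.val = 0 := by omega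
      simp [this]
  rw [hF1] at h1 h2
  have hc := c.isLt; have hd := d.isLt; have hxx := x.isLt; have hyy := y.isLt
  have hzz := z.isLt; have hff := f₀.isLt
  split_ifs at hx hz hf h1 h2 ⊢ <;> omega

section lemG
variable {n : ℕ} [NeZero n] (B : Fin n → Fin n → Prop)

/-- Lemma G -/
theorem lemmaG
    (hrows : ∀ i, CircBlock {j | B i j})
    (hcols : ∀ j, CircBlock {i | B i j})
    (hc4 : ∀ r s t, (∀ j, B r j) →
       (∃ j, B s j) → (∃ j, ¬ B s j) → (∃ j, B t j) → (∃ j, ¬ B t j) →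
       CircBlock {j | B r j ∧ ¬ B s j ∧ ¬ B t j})
    (hRne : ∀ i, ∃ j, B i j)
    (f₀ : Fin n) (hfull : ∀ j, B f₀ j) :
    ∀ N : Finset (Fin n), (∀ i ∈ N, ∃ j, ¬ B i j) →
      ∃ g : Fin n, ∀ i ∈ N, B i g ∨ B i (g + 1) := by
  intro N
  induction N using Finset.strongInduction with
  | _ N IH =>
  intro hN
  rcases N.eq_empty_or_nonempty with rfl | hne
  · exact ⟨f₀, by simp⟩
  obtain ⟨bot, hbotN, hbotmin⟩ := Finset.exists_min_image N (fun i => (i - (f₀+1)).val) hne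
  obtain ⟨g, hg⟩ := IH (N.erase bot) (Finset.erase_ssubset hbotN)
    (fun i hi => hN i (Finset.mem_of_mem_erase hi))
  by_cases hbg : B bot g ∨ B bot (g + 1)
  · refine ⟨g, fun i hi => ?_⟩
    by_cases hib : i = bot
    · subst hib; exact hbg
    · exact hg i (Finset.mem_erase.mpr ⟨hib, hi⟩)
  push_neg at hbg
  obtain ⟨hbg1, hbg2⟩ := hbg
  -- the complement of row bot
  have hCbot : CircBlock {j | ¬ B bot j} := compl (hrows bot)
  rcases hCbot with hemp | ⟨u, w, hrep⟩
  · exfalso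
    have : g ∈ ({j | ¬ B bot j} : Set (Fin n)) := hbg1
    rw [hemp] at this
    exact this
  have hmem : ∀ j, ¬ B bot j ↔ j - u ≤ w - u := fun j => Set.ext_iff.mp hrep j
  obtain ⟨m, hm⟩ : ∃ m, (w - u).val = m := ⟨_, rfl⟩
  have hn : 0 < n := Nat.pos_of_ne_zero (NeZero.ne n)
  have hnfull2 : m ≤ n - 2 ∧ 2 ≤ n := by
    obtain ⟨j₀, hj₀⟩ := hRne bot
    have hj : ¬ (j₀ - u ≤ w - u) := fun hc => (hmem j₀).mpr hc hj₀
    rw [Fin.le_def, hm] at hj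
    have h1 := (j₀ - u).isLt
    omega
  obtain ⟨hnfull, hn2⟩ := hnfull2
  have huC : ¬ B bot u := (hmem u).mpr (by rw [Fin.le_def, sub_self]; exact Nat.zero_le _)
  have hwC : ¬ B bot w := (hmem w).mpr le_rfl
  have hw1 : B bot (w + 1) := by
    by_contra hc
    have hle := (hmem _).mp hc
    rw [Fin.le_def] at hle
    have e : ((w + 1) - u) = (w - u) + 1 := by open Fin.CommRing in ring
    rw [e] at hle
    have e2 : ((w - u) + 1).val = m + 1 := by
      rw [Fin.add_def, Fin.val_one', one_mod hn2, hm]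
      exact Nat.mod_eq_of_lt (by omega)
    rw [e2, hm] at hle
    omega
  have hu1 : B bot (u - 1) := by
    by_contra hc
    have hle := (hmem _).mp hc
    rw [Fin.le_def] at hle
    have e : ((u - 1) - u) = (0 : Fin n) - 1 := by open Fin.CommRing in ring
    rw [e] at hle
    have e2 : ((0 : Fin n) - 1).val = n - 1 := by
      rw [subval]
      simp only [Fin.val_zero, Fin.val_one']
      simp only [one_mod hn2]
      split_ifs <;> omega
    rw [e2, hm] at hle
    omega
  -- final common contradiction
  have final : ∀ kk, kk ∈ N → kk ≠ bot → ¬ B kk u → ¬ B kk w → False := by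
    intro kk hkkN hkkbot hku hkw
    have hT : CircBlock {j | B f₀ j ∧ ¬ B bot j ∧ ¬ B kk j} :=
      hc4 f₀ bot kk hfull (hRne bot) ⟨g, hbg1⟩ (hRne kk) ⟨u, hku⟩
    have huT : u ∈ {j | B f₀ j ∧ ¬ B bot j ∧ ¬ B kk j} := ⟨hfull u, huC, hku⟩
    have hwT : w ∈ {j | B f₀ j ∧ ¬ B bot j ∧ ¬ B kk j} := ⟨hfull w, hwC, hkw⟩
    have huw : u ≠ w := by
      intro he
      subst he
      have e1 : g = u := by
        have hle := (hmem g).mp hbg1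
        rw [Fin.le_def, sub_self, Fin.val_zero] at hle
        have h0 : (g - u).val = 0 := by omega
        exact sub_eq_zero.mp (Fin.ext h0)
      have e2 : g + 1 = u := by
        have hle := (hmem (g+1)).mp hbg2
        rw [Fin.le_def, sub_self, Fin.val_zero] at hle
        have h0 : (g + 1 - u).val = 0 := by omega
        exact sub_eq_zero.mp (Fin.ext h0)
      rw [e1] at e2
      exact succ_ne hn2 u e2
    rcases dichotomy hT huT hwT with hside | hside
    · have hgT := hside g ((hmem g).mp hbg1)
      have hg1T := hside (g+1) ((hmem (g+1)).mp hbg2)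
      have hork := hg kk (Finset.mem_erase.mpr ⟨hkkbot, hkkN⟩)
      rcases hork with h | h
      · exact hgT.2.2 h
      · exact hg1T.2.2 h
    · have hw1T : (w + 1) ∈ {j | B f₀ j ∧ ¬ B bot j ∧ ¬ B kk j} := by
        apply hside
        rw [Fin.le_def]
        have e : (w + 1 - w) = (1 : Fin n) := by open Fin.CommRing in ring
        rw [e, Fin.val_one', one_mod hn2]
        rw [subval]
        have hvne : u.val ≠ w.val := fun hc => huw (Fin.ext hc)
        have := u.isLt; have := w.isLt
        split_ifs with h' <;> omega
      exact hw1T.2.1 hw1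
  -- try g' = w
  by_cases hwcase : ∀ i ∈ N, B i w ∨ B i (w + 1)
  · exact ⟨w, hwcase⟩
  push_neg at hwcase
  obtain ⟨k, hkN, hkw, hkw1⟩ := hwcase
  have hkbot : k ≠ bot := fun hc => by rw [hc] at hkw1; exact hkw1 hw1
  -- try g' = u - 1
  by_cases hucase : ∀ i ∈ N, B i (u - 1) ∨ B i ((u - 1) + 1)
  · exact ⟨u - 1, hucase⟩
  push_neg at hucase
  obtain ⟨k', hk'N, hk'u1, hk'u⟩ := hucase
  rw [sub_add_cancel] at hk'u
  have hk'bot : k' ≠ bot := fun hc => by rw [hc] at hk'u1; exact hk'u1 hu1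
  have hDu : CircBlock {i | ¬ B i u} := compl (hcols u)
  have hDw : CircBlock {i | ¬ B i w} := compl (hcols w)
  rcases le_or_gt ((k - (f₀+1)).val) ((k' - (f₀+1)).val) with hkk | hkk
  · have hku : ¬ B k u :=
      betw hDu (not_not_intro (hfull u)) huC hk'u (hbotmin k hkN) hkk
    exact absurd (final k hkN hkbot hku hkw) id
  · have hk'w : ¬ B k' w :=
      betw hDw (not_not_intro (hfull w)) hwC hkw (hbotmin k' hk'N) (le_of_lt hkk)
    exact absurd (final k' hk'N hk'bot hk'u hk'w) id
end lemG

end CB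
namespace CB

/-- cast of Fin subtraction to integer arithmetic -/
lemma valcast {n : ℕ} (hn : 0 < n) (j a : Fin n) :
    ((j.val : ℤ) - (a.val : ℤ)) % (n : ℤ) = ((j - a).val : ℤ) := by
  have hj := j.isLt; have ha := a.isLt
  have h2 : ((j.val:ℤ) - a.val + n) % n = ((j.val:ℤ) - a.val) % n := by
    have := Int.add_mul_emod_self_left (a := (j.val:ℤ) - a.val) (b := (n:ℤ)) (c := 1)
    simpa using this
  rw [subval]
  split_ifs with h
  · have he : ((j.val:ℤ) - a.val) % n = (j.val:ℤ) - a.val :=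
      Int.emod_eq_of_lt (by omega) (by omega)
    rw [he]
    push_cast [Nat.cast_sub h]
    ring
  · rw [← h2]
    have he : ((j.val:ℤ) - a.val + n) % n = (j.val:ℤ) - a.val + n :=
      Int.emod_eq_of_lt (by omega) (by omega)
    rw [he]
    push_cast [Nat.cast_sub (by omega : a.val ≤ j.val + n)]
    ring

/-- the uniform membership computation for constructed arcs -/
lemma comp (n : ℕ) (hn : 0 < n) (av mi : ℕ) (c : ℤ) (θ x : ℝ)
    (hx0 : 0 < x) (hθ : 0 ≤ θ)
    (hbound : ((((c - av) % n : ℤ) : ℝ)) + θ + x < n) :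
    (arcMem (((av : ℝ) - x)/n) (((mi : ℝ) + 2*x)/n) (((c : ℝ) + θ)/n)) ↔
      (((((c - av) % n : ℤ) : ℝ)) + θ ≤ (mi : ℝ) + x) := by
  have hne : (n : ℝ) ≠ 0 := by positivity
  set M : ℤ := (c - av) % n with hM
  have hM0 : (0:ℤ) ≤ M := Int.emod_nonneg _ (by exact_mod_cast hn.ne')
  have hq' : ((c:ℝ)) - av = (M:ℝ) + n * (((c - av)/n : ℤ) : ℝ) := by
    have h := Int.emod_add_mul_ediv (c - (av:ℤ)) n
    have : ((c - (av:ℤ)) % n + n * ((c - av) / n) : ℤ) = c - av := h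
    have hcast := congrArg (Int.cast : ℤ → ℝ) this
    push_cast at hcast
    linarith
  have key : ((c : ℝ) + θ)/n - ((av : ℝ) - x)/n
      = ((M:ℝ) + θ + x)/n + (((c - av)/n : ℤ) : ℝ) := by
    field_simp
    linarith [hq']
  have hfr : Int.fract (((c : ℝ) + θ)/n - ((av : ℝ) - x)/n) = ((M:ℝ) + θ + x)/n := by
    rw [key, Int.fract_add_intCast]
    apply Int.fract_eq_self.mpr
    constructor
    · apply div_nonneg _ (by positivity)
      have : (0:ℝ) ≤ (M:ℝ) := by exact_mod_cast hM0
      linarith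
    · rw [div_lt_one (by positivity)]
      exact hbound
  unfold arcMem
  rw [hfr]
  rw [div_le_div_iff_of_pos_right (by positivity : (0:ℝ) < n)]
  constructor
  · intro h; linarith
  · intro h; linarith

/-- integer-versus-real threshold -/
lemma intle (M mi : ℕ) (x : ℝ) (h0 : 0 < x) (h1 : x < 1) :
    ((M:ℝ) + 0 ≤ (mi:ℝ) + x) ↔ M ≤ mi := by
  constructor
  · intro h
    by_contra hc
    push_neg at hc
    have : (mi:ℝ) + 1 ≤ (M:ℝ) := by exact_mod_cast hc
    linarith
  · intro h
    have : (M:ℝ) ≤ (mi:ℝ) := by exact_mod_cast h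
    linarith

end CB
namespace CB

lemma comp2 (n : ℕ) (hn : 0 < n) (av mi M : ℕ) (c : ℤ) (θ x : ℝ)
    (hx0 : 0 < x) (hθ : 0 ≤ θ)
    (hMeq : ((c - (av:ℤ)) % (n:ℤ)) = (M : ℤ))
    (hbound : (M : ℝ) + θ + x < n) :
    (arcMem (((av : ℝ) - x)/n) (((mi : ℝ) + 2*x)/n) (((c : ℝ) + θ)/n)) ↔
      ((M : ℝ) + θ ≤ (mi : ℝ) + x) := by
  have h := comp n hn av mi c θ x hx0 hθ (by rw [hMeq]; push_cast; exact hbound)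
  rw [hMeq] at h
  push_cast at h
  exact h

lemma arc_shift (a l t t' : ℝ) (q : ℤ) (h : t - t' = q) :
    arcMem a l t ↔ arcMem a l t' := by
  unfold arcMem
  rw [fract_shift (t - a) (t' - a) q (by linarith)]

lemma neg_one_mod {n : ℕ} (hn : 0 < n) : ((-1 : ℤ) % (n:ℤ)) = (n : ℤ) - 1 := by
  have h1 : ((-1 : ℤ) + n) % n = (-1 : ℤ) % n := by
    have := Int.add_mul_emod_self_left (a := (-1 : ℤ)) (b := (n:ℤ)) (c := 1)
    simpa using this
  rw [← h1]
  have : (-1 : ℤ) + n = (n:ℤ) - 1 := by ring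
  rw [this]
  exact Int.emod_eq_of_lt (by omega) (by omega)

lemma V0 {n : ℕ} [NeZero n] {x y : Fin n} : (x - y).val = 0 ↔ x = y := by
  constructor
  · intro h
    have : x - y = 0 := Fin.ext (by simp [h])
    exact sub_eq_zero.mp this
  · intro h; subst h; simp

lemma VN {n : ℕ} [NeZero n] {x y : Fin n} (h : (x - y).val ≠ 0) : (y - x).val = n - (x - y).val := by
  have hvne : x.val ≠ y.val := by
    intro he
    apply h
    rw [subval]
    split_ifs <;> omega
  rw [subval, subval] at *
  have := x.isLt; have := y.isLt
  split_ifs at * <;> omega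

lemma VA2 {n : ℕ} [NeZero n] (x y : Fin n) (c : ℕ) (hc : c < n) :
    ((x + ⟨c, hc⟩) - y).val = ((x - y).val + c) % n := by
  have e : (x + ⟨c, hc⟩) - y = (x - y) + ⟨c, hc⟩ := by open Fin.CommRing in ring
  rw [e, Fin.add_def]

lemma VA1 {n : ℕ} [NeZero n] (x : Fin n) (c : ℕ) (hc : c < n) :
    ((x + ⟨c, hc⟩) - x).val = c := by
  rw [VA2]
  simp only [sub_self, Fin.val_zero, Nat.zero_add]
  exact Nat.mod_eq_of_lt hc

lemma VD {n : ℕ} [NeZero n] (h2 : 2 ≤ n) (x y : Fin n) :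
    ((x - 1) - y).val = if (x - y).val = 0 then n - 1 else (x - y).val - 1 := by
  have e : (x - 1) - y = (x - y) - 1 := by open Fin.CommRing in ring
  rw [e, subval]
  rw [Fin.val_one', one_mod h2]
  have := (x - y).isLt
  split_ifs <;> omega

lemma val_succ {n : ℕ} [NeZero n] (g : Fin n) :
    ((g + 1 : Fin n)).val = if g.val = n - 1 then 0 else g.val + 1 := by
  have hn : 0 < n := Nat.pos_of_ne_zero (NeZero.ne n)
  rw [Fin.add_def]
  simp only [Fin.val_one']
  have hg := g.isLt
  rcases Nat.lt_or_ge 1 n with h | h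
  · rw [Nat.mod_eq_of_lt h]
    split_ifs with h'
    · rw [h']
      have : n - 1 + 1 = n := by omega
      rw [this, Nat.mod_self]
    · exact Nat.mod_eq_of_lt (by omega)
  · have hn1 : n = 1 := by omega
    subst hn1
    simp only [Nat.mod_self]
    have : g.val = 0 := by omega
    simp [this]

/-- integer congruence of g+1 cast -/
lemma succ_cast_mod {n : ℕ} [NeZero n] (g : Fin n) :
    (((g + 1 : Fin n)).val : ℤ) % n = ((g.val : ℤ) + 1) % n := by
  have hn : 0 < n := Nat.pos_of_ne_zero (NeZero.ne n)
  rw [val_succ]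
  split_ifs with h
  · rw [h]
    have e : ((n:ℤ) - 1) + 1 = n := by ring
    have : ((n - 1 : ℕ) : ℤ) + 1 = (n:ℤ) := by push_cast [Nat.cast_sub hn]; ring
    rw [show ((0:ℕ):ℤ) = 0 by norm_num, Int.zero_emod]
    rw [this, Int.emod_self]
  · push_cast
    rfl

end CB
namespace CB

set_option maxHeartbeats 1600000 in
theorem construct {n : ℕ} [NeZero n] (B : Fin n → Fin n → Prop)
    (hMr : ∀ i, CircBlock {j | B i j})
    (hMc : ∀ j, CircBlock {i | B i j})
    (hM3 : ∀ r s, CircBlock {j | B r j ∧ ¬ B s j})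
    (hM4 : ∀ r s t, (∀ j, B r j) →
       (∃ j, B s j) → (∃ j, ¬ B s j) → (∃ j, B t j) → (∃ j, ¬ B t j) →
       CircBlock {j | B r j ∧ ¬ B s j ∧ ¬ B t j})
    (hRne : ∀ i, ∃ j, B i j) :
    ∃ σf Λf P : Fin n → ℝ,
      (∀ i j, arcMem (σf i) (Λf i) (P j) ↔ B i j) ∧
      (∀ i k, ¬ (arcSet (σf i) (Λf i) ⊂ arcSet (σf k) (Λf k))) := by
  classical
  have hnpos : 0 < n := Nat.pos_of_ne_zero (NeZero.ne n)
  have hn2' : ∀ i : Fin n, (∃ j, ¬ B i j) → 2 ≤ n := by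
    intro i hex
    obtain ⟨j0, hj0⟩ := hex
    obtain ⟨j1, hj1⟩ := hRne i
    by_contra hlt
    push_neg at hlt
    have hj01 : j0 = j1 := Fin.ext (by have := j0.isLt; have := j1.isLt; omega)
    exact hj0 (hj01 ▸ hj1)
  obtain ⟨g, hG⟩ : ∃ g : Fin n, (∃ f₀, ∀ j, B f₀ j) →
      ∀ i, (∃ j, ¬ B i j) → B i g ∨ B i (g + 1) := by
    by_cases hfx : ∃ f₀, ∀ j, B f₀ j
    · obtain ⟨f₀, hf₀⟩ := hfx
      obtain ⟨g, hg⟩ := lemmaG B hMr hMc hM4 hRne f₀ hf₀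
        (Finset.univ.filter (fun i => ∃ j, ¬ B i j))
        (fun i hi => (Finset.mem_filter.mp hi).2)
      exact ⟨g, fun _ i hi => hg i (Finset.mem_filter.mpr ⟨Finset.mem_univ _, hi⟩)⟩
    · exact ⟨⟨0, hnpos⟩, fun hc => absurd hc hfx⟩
  -- row data
  have hdata : ∀ i : Fin n, ∃ ai : Fin n, ∃ mi : ℕ,
      (∀ j, B i j ↔ (j - ai).val ≤ mi) ∧ mi ≤ n - 1 ∧
      ((∀ j, B i j) → (ai = g + 1 ∧ mi = n - 1)) ∧
      ((∃ j, ¬ B i j) → mi ≤ n - 2) := by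
    intro i
    by_cases hfi : ∀ j, B i j
    · refine ⟨g + 1, n - 1, ?_, le_refl _, fun _ => ⟨rfl, rfl⟩, ?_⟩
      · intro j
        constructor
        · intro _; have := (j - (g+1)).isLt; omega
        · intro _; exact hfi j
      · rintro ⟨j, hj⟩; exact absurd (hfi j) hj
    · have hblock := hMr i
      rcases hblock with hemp2 | ⟨a0, b0, hrep0⟩
      · exfalso
        obtain ⟨j, hj⟩ := hRne i
        have : j ∈ {j | B i j} := hj
        rw [hemp2] at this
        exact this
      refine ⟨a0, (b0 - a0).val, ?_, ?_, fun hc => absurd hc hfi, ?_⟩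
      · intro j
        have hj := Set.ext_iff.mp hrep0 j
        rw [Set.mem_setOf_eq, Set.mem_setOf_eq] at hj
        rw [hj]
        exact Fin.le_def
      · have := (b0 - a0).isLt; omega
      · intro hex
        by_contra hc
        push_neg at hc
        have hn2 := hn2' i hex
        apply hfi
        intro j
        have hj := Set.ext_iff.mp hrep0 j
        apply hj.mpr
        show j - a0 ≤ b0 - a0
        rw [Fin.le_def]
        have h1 := (j - a0).isLt
        have h2 := (b0 - a0).isLt
        omega
  choose af mf hrep hmle hfsp hnfsp using hdata
  -- real data
  obtain ⟨xf, hxf⟩ : ∃ xf : Fin n → ℝ, ∀ i, xf i = ((n:ℝ) - mf i)/((n:ℝ)+2) :=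
    ⟨_, fun _ => rfl⟩
  obtain ⟨σf, hσf⟩ : ∃ σf : Fin n → ℝ, ∀ i, σf i = (((af i).val : ℝ) - xf i)/n :=
    ⟨_, fun _ => rfl⟩
  obtain ⟨Λf, hΛf⟩ : ∃ Λf : Fin n → ℝ, ∀ i, Λf i = ((mf i : ℝ) + 2 * xf i)/n :=
    ⟨_, fun _ => rfl⟩
  obtain ⟨P, hP⟩ : ∃ P : Fin n → ℝ, ∀ j : Fin n, P j = ((j.val : ℝ))/n :=
    ⟨_, fun _ => rfl⟩
  have hncast : ((n - 1 : ℕ) : ℝ) = (n:ℝ) - 1 := by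
    push_cast [Nat.cast_sub hnpos]; ring
  have hmcast : ∀ i, (mf i : ℝ) ≤ (n:ℝ) - 1 := by
    intro i
    rw [← hncast]
    exact_mod_cast hmle i
  have hx0 : ∀ i, 0 < xf i := by
    intro i
    rw [hxf]
    apply div_pos _ (by positivity)
    linarith [hmcast i]
  have hx1 : ∀ i, xf i < 1 := by
    intro i
    rw [hxf, div_lt_one (by positivity)]
    have : (0:ℝ) ≤ (mf i : ℝ) := Nat.cast_nonneg _
    linarith
  have hxmono : ∀ i k, mf i < mf k → xf k < xf i := by
    intro i k h
    rw [hxf, hxf, div_lt_div_iff_of_pos_right (by positivity : (0:ℝ) < (n:ℝ)+2)]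
    have h' : (mf i:ℝ) < mf k := by exact_mod_cast h
    linarith
  have hn1R : (1:ℝ) ≤ (n:ℝ) := by exact_mod_cast hnpos
  have hΛ0 : ∀ i, 0 ≤ Λf i := by
    intro i
    rw [hΛf]
    apply div_nonneg _ (by positivity)
    have h1 := hx0 i
    have h2 : (0:ℝ) ≤ (mf i:ℝ) := Nat.cast_nonneg _
    linarith
  have hlen : ∀ i, (mf i:ℝ) + 2 * xf i < n := by
    intro i
    have e : xf i * ((n:ℝ)+2) = (n:ℝ) - mf i := by
      rw [hxf]; field_simp
    nlinarith [hx0 i, hn1R]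
  have hBi_ai : ∀ i, B i (af i) := by
    intro i
    apply (hrep i _).mpr
    rw [sub_self, Fin.val_zero]
    exact Nat.zero_le _
  have hLend : ∀ i, arcMem (σf i) (Λf i) (σf i) := by
    intro i
    show Int.fract (σf i - σf i) ≤ Λf i
    rw [sub_self, Int.fract_zero]
    exact hΛ0 i
  have hmltn : ∀ i, mf i < n := fun i => by have := hmle i; omega
  have hRend : ∀ i, arcMem (σf i) (Λf i) (((((af i).val + mf i : ℕ) : ℝ) + xf i)/n) := by
    intro i
    have hMeq : ((((af i).val + mf i : ℕ) : ℤ) - ((af i).val:ℤ)) % (n:ℤ) = ((mf i : ℕ) : ℤ) := by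
      have e2 : ((((af i).val + mf i : ℕ)) : ℤ) - ((af i).val:ℤ) = (mf i : ℤ) := by push_cast; ring
      rw [e2]
      exact Int.emod_eq_of_lt (by positivity) (by exact_mod_cast hmltn i)
    have hbound : ((mf i : ℕ):ℝ) + xf i + xf i < n := by
      have := hlen i; linarith
    have e : ((((af i).val + mf i : ℕ):ℝ) + xf i)/n = (((((af i).val + mf i : ℕ) : ℤ):ℝ) + xf i)/n := by
      push_cast; ring
    rw [e, hσf i, hΛf i,
      comp2 n hnpos ((af i).val) (mf i) (mf i) (((af i).val + mf i : ℕ) : ℤ) (xf i) (xf i)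
        (hx0 i) (le_of_lt (hx0 i)) hMeq hbound]
  have hR3 : ∀ i j, arcMem (σf i) (Λf i) (P j) ↔ B i j := by
    intro i j
    have hMeq := valcast hnpos j (af i)
    have hjlt := (j - af i).isLt
    have hjcast : (((j - af i).val : ℕ):ℝ) ≤ (n:ℝ) - 1 := by
      rw [← hncast]; exact_mod_cast Nat.le_sub_one_of_lt hjlt
    have hbound : (((j - af i).val : ℕ):ℝ) + 0 + xf i < n := by
      linarith [hx1 i]
    have e : P j = (((j.val:ℤ):ℝ) + 0)/n := by rw [hP]; push_cast; ring
    rw [e, hσf i, hΛf i,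
      comp2 n hnpos ((af i).val) (mf i) ((j - af i).val) (j.val) 0 (xf i)
        (hx0 i) le_rfl hMeq hbound]
    rw [hrep i j]
    constructor
    · intro h
      have h2 : (((j - af i).val:ℕ):ℝ) < (mf i:ℝ) + 1 := by linarith [hx1 i]
      have h3 : (j - af i).val < mf i + 1 := by exact_mod_cast h2
      omega
    · intro h
      have h3 : (((j - af i).val:ℕ):ℝ) ≤ (mf i:ℝ) := by exact_mod_cast h
      linarith [hx0 i]
  have hnB_am1 : ∀ i, 2 ≤ n → mf i ≤ n - 2 → ¬ B i (af i - 1) := by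
    intro i hn2 hmi2 hc
    have hv := (hrep i _).mp hc
    rw [VD hn2 (af i) (af i), sub_self, Fin.val_zero] at hv
    have hv' : n - 1 ≤ mf i := by simpa using hv
    omega
  -- main properness
  have hprop : ∀ i k : Fin n, ¬ (arcSet (σf i) (Λf i) ⊂ arcSet (σf k) (Λf k)) := by
    intro i k hss
    by_cases hiff : ∀ j, B i j ↔ B k j
    · -- equal rows: equal arcs
      have hdataeq : af i = af k ∧ mf i = mf k := by
        by_cases hfi : ∀ j, B i j
        · have hfk : ∀ j, B k j := fun j => (hiff j).mp (hfi j)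
          obtain ⟨h1, h2⟩ := hfsp i hfi
          obtain ⟨h3, h4⟩ := hfsp k hfk
          exact ⟨h1.trans h3.symm, h2.trans h4.symm⟩
        · have hinf : ∃ j, ¬ B i j := by
            push_neg at hfi; exact hfi
          have hinf' : ∃ j, ¬ B k j := by
            obtain ⟨j, hj⟩ := hinf
            exact ⟨j, fun hc => hj ((hiff j).mpr hc)⟩
          have hn2 := hn2' i hinf
          have hmi2 := hnfsp i hinf
          have hmk2 := hnfsp k hinf'
          have haeq : af i = af k := by
            have hB1 : B i (af k) := (hiff _).mpr (hBi_ai k)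
            have hB2 : ¬ B i (af k - 1) := fun hc => hnB_am1 k hn2 hmk2 ((hiff _).mp hc)
            have hv1 := (hrep i _).mp hB1
            have hv2 : ¬ ((af k - 1 - af i).val ≤ mf i) := fun hc => hB2 ((hrep i _).mpr hc)
            rw [VD hn2 (af k) (af i)] at hv2
            by_cases h0 : (af k - af i).val = 0
            · exact (V0.mp h0).symm
            · rw [if_neg h0] at hv2
              omega
          have hmeq : mf i = mf k := by
            have hj1 : B i (af i + ⟨mf i, hmltn i⟩) :=
              (hrep i _).mpr (VA1 (af i) (mf i) (hmltn i)).le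
            have hj2 : B k (af k + ⟨mf k, hmltn k⟩) :=
              (hrep k _).mpr (VA1 (af k) (mf k) (hmltn k)).le
            have h1 := (hrep k _).mp ((hiff _).mp hj1)
            have h2 := (hrep i _).mp ((hiff _).mpr hj2)
            rw [haeq, VA1] at h1
            rw [← haeq, VA1] at h2
            omega
          exact ⟨haeq, hmeq⟩
      have heqset : arcSet (σf i) (Λf i) = arcSet (σf k) (Λf k) := by
        have e1 : σf i = σf k := by rw [hσf, hσf, hdataeq.1, hxf, hxf, hdataeq.2]
        have e2 : Λf i = Λf k := by rw [hΛf, hΛf, hxf, hxf, hdataeq.2]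
        rw [e1, e2]
      exact (ne_of_ssubset hss) heqset
    · by_cases hsub : ∀ j, B i j → B k j
      · -- S_i strictly inside S_k
        obtain ⟨j₀, hbkj₀, hbij₀⟩ : ∃ j, B k j ∧ ¬ B i j := by
          by_contra hc
          push_neg at hc
          exact hiff (fun j => ⟨hsub j, hc j⟩)
        have hinf : ∃ j, ¬ B i j := ⟨j₀, hbij₀⟩
        have hn2 := hn2' i hinf
        have hmi2 := hnfsp i hinf
        by_cases hfk : ∀ j, B k j
        · -- k is a full row
          obtain ⟨hak, hmk⟩ := hfsp k hfk
          have hxk : xf k = 1/((n:ℝ)+2) := by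
            rw [hxf, hmk, hncast]; ring_nf
          have hximax : xf i + xf k < 1 := by
            have h1 : (0:ℝ) ≤ (mf i:ℝ) := Nat.cast_nonneg _
            rw [hxf, hxk]
            rw [← add_div, div_lt_one (by positivity)]
            linarith
          have hxik : xf k < xf i := hxmono i k (by omega)
          have hmkcast : (mf k : ℝ) = (n:ℝ) - 1 := by rw [hmk, hncast]
          have hGi := hG ⟨k, hfk⟩ i hinf
          have hMeqg : (((g.val:ℤ)) - (((g+1:Fin n)).val:ℤ)) % (n:ℤ) = (((n-1:ℕ)):ℤ) := by
            have h1 : ((g.val:ℤ) - ((g+1:Fin n)).val) % n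
                = ((g.val:ℤ) - ((g.val:ℤ)+1)) % n := by
              rw [Int.sub_emod, succ_cast_mod, ← Int.sub_emod]
            rw [h1]
            have h2 : (g.val:ℤ) - ((g.val:ℤ)+1) = -1 := by ring
            rw [h2, neg_one_mod hnpos]
            omega
          by_cases hig1 : B i (g+1)
          · by_cases hig : B i g
            · -- mid witness
              have hm'le := (hrep i g).mp hig
              have hm'lt : (g - af i).val < mf i := by
                have h1 := (hrep i (g+1)).mp hig1
                have e1 : (g + 1 - af i) = (g - af i) + 1 := by open Fin.CommRing in ring
                rw [e1] at h1
                have e2 : ((g - af i) + 1).val = (g - af i).val + 1 := by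
                  rw [Fin.add_def, Fin.val_one', one_mod hn2]
                  exact Nat.mod_eq_of_lt (by omega)
                rw [e2] at h1
                rcases Nat.lt_or_ge ((g - af i).val) (mf i) with h | h
                · exact h
                · omega
              have hm'cast : ((g - af i).val : ℝ) + 1 ≤ (mf i : ℝ) := by
                exact_mod_cast hm'lt
              have hmicast : (mf i : ℝ) ≤ (n:ℝ) - 2 := by
                have : mf i + 2 ≤ n := by omega
                have := (by exact_mod_cast this : (mf i:ℝ) + 2 ≤ (n:ℝ))
                linarith
              have hxk12 : xf k < 1/2 := by
                rw [hxk, div_lt_div_iff₀ (by positivity) (by norm_num)]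
                linarith [hn1R]
              have hyes : arcMem (σf i) (Λf i) (((((g.val:ℤ)):ℝ) + 1/2)/n) := by
                have hMeq := valcast hnpos g (af i)
                have hbound : (((g - af i).val:ℕ):ℝ) + 1/2 + xf i < n := by
                  linarith [hx1 i, hmicast, hm'cast]
                rw [hσf i, hΛf i,
                  comp2 n hnpos ((af i).val) (mf i) ((g - af i).val) (g.val) (1/2) (xf i)
                    (hx0 i) (by norm_num) hMeq hbound]
                linarith [hx0 i, hm'cast]
              have hno : ¬ arcMem (σf k) (Λf k) (((((g.val:ℤ)):ℝ) + 1/2)/n) := by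
                have hb6 : (((n-1:ℕ)):ℝ) + 1/2 + xf k < n := by
                  rw [hncast]; linarith [hxk12]
                rw [hσf k, hΛf k, hak,
                  comp2 n hnpos (((g+1:Fin n)).val) (mf k) (n-1) (g.val) (1/2) (xf k)
                    (hx0 k) (by norm_num) hMeqg hb6]
                push_neg
                rw [hncast, hmkcast]
                linarith [hxk12]
              exact hno (hss.1 hyes)
            · have haig : af i = af k := by
                have h1 := (hrep i (g+1)).mp hig1
                have h2 : ¬ ((g - af i).val ≤ mf i) := fun hc => hig ((hrep i g).mpr hc)
                have e1 : g = (g + 1) - 1 := by open Fin.CommRing in ring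
                rw [e1, VD hn2 (g+1) (af i)] at h2
                rw [hak]
                by_cases h0 : ((g+1 : Fin n) - af i).val = 0
                · exact (V0.mp h0).symm
                · rw [if_neg h0] at h2
                  omega
              have hno : ¬ arcMem (σf k) (Λf k) (σf i) := by
                have hMeq : ((((af i).val:ℤ) - 1) - ((af k).val:ℤ)) % (n:ℤ) = ((n-1:ℕ):ℤ) := by
                  have e2 : (((af i).val:ℤ) - 1) - ((af k).val:ℤ) = -1 := by
                    rw [haig]; ring
                  rw [e2, neg_one_mod hnpos]
                  omega
                have hbound : (((n-1:ℕ)):ℝ) + (1 - xf i) + xf k < n := by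
                  rw [hncast]; linarith [hxik]
                have e : σf i = ((((((af i).val:ℤ) - 1):ℤ):ℝ) + (1 - xf i))/n := by
                  rw [hσf]; push_cast; ring
                rw [e, hσf k, hΛf k,
                  comp2 n hnpos ((af k).val) (mf k) (n-1) (((af i).val:ℤ) - 1) (1 - xf i) (xf k)
                    (hx0 k) (by linarith [hx1 i]) hMeq hbound]
                push_neg
                rw [hncast, hmkcast]
                linarith [hximax]
              exact hno (hss.1 (hLend i))
          · have hig : B i g := hGi.resolve_right hig1
            have hend : (g - af i).val = mf i := by
              have h1 := (hrep i g).mp hig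
              have h2 : ¬ (((g + 1 : Fin n) - af i).val ≤ mf i) := fun hc => hig1 ((hrep i _).mpr hc)
              have e1 : (g + 1 - af i) = (g - af i) + 1 := by open Fin.CommRing in ring
              rw [e1] at h2
              have e2 : ((g - af i) + 1).val = (g - af i).val + 1 := by
                rw [Fin.add_def, Fin.val_one', one_mod hn2]
                have h3 := (g - af i).isLt
                exact Nat.mod_eq_of_lt (by omega)
              rw [e2] at h2
              omega
            obtain ⟨q, hq⟩ : ∃ q : ℤ, ((af i).val:ℤ) + mf i - g.val = n * q := by
              have h1 := valcast hnpos g (af i)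
              rw [hend] at h1
              refine ⟨-(((g.val:ℤ) - (af i).val) / n), ?_⟩
              have h2 := Int.emod_add_mul_ediv ((g.val:ℤ) - (af i).val) n
              rw [h1] at h2
              linarith
            have hne : (n:ℝ) ≠ 0 := by positivity
            have hqR : (((af i).val:ℝ) + (mf i:ℝ)) - (g.val:ℝ) = (n:ℝ) * (q:ℤ) := by
              have := congrArg (fun z : ℤ => (z:ℝ)) hq
              push_cast at this
              push_cast
              linarith
            have hshift : ((((af i).val + mf i : ℕ):ℝ) + xf i)/n - ((((g.val:ℤ)):ℝ) + xf i)/n = ((q:ℤ):ℝ) := by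
              field_simp
              push_cast
              linarith [hqR]
            have hb4 : (((n-1:ℕ)):ℝ) + xf i + xf k < n := by
              rw [hncast]; linarith [hximax]
            have hno : ¬ arcMem (σf k) (Λf k) ((((((af i).val + mf i : ℕ)):ℝ) + xf i)/n) := by
              rw [arc_shift (σf k) (Λf k) _ ((((((g.val:ℤ))):ℝ) + xf i)/n) q hshift]
              rw [hσf k, hΛf k, hak,
                comp2 n hnpos (((g+1:Fin n)).val) (mf k) (n-1) (g.val) (xf i) (xf k)
                  (hx0 k) (le_of_lt (hx0 i)) hMeqg hb4]
              push_neg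
              rw [hncast, hmkcast]
              linarith [hxik]
            exact hno (hss.1 (hRend i))
        · have hinf2 : ∃ j, ¬ B k j := by push_neg at hfk; exact hfk
          have hmk2 := hnfsp k hinf2
          have hdlt := (af i - af k).isLt
          have hmkn := hmltn k
          have hmin := hmltn i
          have hδle : (af i - af k).val ≤ mf k := (hrep k _).mp (hsub _ (hBi_ai i))
          have hwrap : (af i - af k).val + mf i < n := by
            by_contra hw
            push_neg at hw
            have hδ0 : (af i - af k).val ≠ 0 := by
              intro h0
              rw [h0] at hw
              omega
            have hvn : (af k - af i).val = n - (af i - af k).val := VN hδ0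
            have hB1 : B i (af k - 1) := by
              apply (hrep i _).mpr
              rw [VD hn2 (af k) (af i), if_neg (by rw [hvn]; omega)]
              rw [hvn]
              omega
            exact hnB_am1 k hn2 hmk2 (hsub _ hB1)
          have hsum : (af i - af k).val + mf i ≤ mf k := by
            have hb : B i (af i + ⟨mf i, hmltn i⟩) := (hrep i _).mpr (VA1 (af i) (mf i) (hmltn i)).le
            have hbk2 := (hrep k _).mp (hsub _ hb)
            rw [VA2, Nat.mod_eq_of_lt hwrap] at hbk2
            exact hbk2
          by_cases hδ0 : (af i - af k).val = 0
          · have haik : af i = af k := V0.mp hδ0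
            have hmm : mf i < mf k := by
              rcases Nat.lt_or_ge (mf i) (mf k) with h | h
              · exact h
              · exfalso
                have hmeq2 : mf i = mf k := by omega
                exact hiff (fun j => by rw [hrep i, hrep k, haik, hmeq2])
            have hxik := hxmono i k hmm
            have hmkcast2 : (mf k:ℝ) ≤ (n:ℝ) - 2 := by
              have h1 : mf k + 2 ≤ n := by omega
              have h2 : (mf k:ℝ) + 2 ≤ (n:ℝ) := by exact_mod_cast h1
              linarith
            have hno : ¬ arcMem (σf k) (Λf k) (σf i) := by
              have hMeq : ((((af i).val:ℤ) - 1) - ((af k).val:ℤ)) % (n:ℤ) = ((n-1:ℕ):ℤ) := by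
                have e2 : (((af i).val:ℤ) - 1) - ((af k).val:ℤ) = -1 := by rw [haik]; ring
                rw [e2, neg_one_mod hnpos]
                omega
              have hbound : (((n-1:ℕ)):ℝ) + (1 - xf i) + xf k < n := by
                rw [hncast]; linarith
              have e : σf i = ((((((af i).val:ℤ) - 1):ℤ):ℝ) + (1 - xf i))/n := by
                rw [hσf]; push_cast; ring
              rw [e, hσf k, hΛf k,
                comp2 n hnpos ((af k).val) (mf k) (n-1) (((af i).val:ℤ) - 1) (1 - xf i) (xf k)
                  (hx0 k) (by linarith [hx1 i]) hMeq hbound]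
              push_neg
              rw [hncast]
              linarith [hx1 i, hx1 k]
            exact hno (hss.1 (hLend i))
          · have hδ1 : 1 ≤ (af i - af k).val := Nat.one_le_iff_ne_zero.mpr hδ0
            by_cases hsum_eq : (af i - af k).val + mf i = mf k
            · have hmm : mf i < mf k := by omega
              have hxik := hxmono i k hmm
              have hmkcast2 : (mf k:ℝ) ≤ (n:ℝ) - 2 := by
                have h1 : mf k + 2 ≤ n := by omega
                have h2 : (mf k:ℝ) + 2 ≤ (n:ℝ) := by exact_mod_cast h1
                linarith
              have hno : ¬ arcMem (σf k) (Λf k) (((((((af i).val + mf i:ℕ))):ℝ) + xf i)/n) := by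
                have h1 := valcast hnpos (af i) (af k)
                have hMeq : ((((af i).val + mf i : ℕ):ℤ) - ((af k).val:ℤ)) % (n:ℤ) = ((mf k:ℕ):ℤ) := by
                  have e2 : (((af i).val + mf i : ℕ):ℤ) - ((af k).val:ℤ)
                      = ((((af i).val:ℤ) - (af k).val)) + (mf i:ℤ) := by push_cast; ring
                  rw [e2, Int.add_emod, h1]
                  have hmod1 : ((mf i:ℕ):ℤ) % (n:ℤ) = ((mf i:ℕ):ℤ) :=
                    Int.emod_eq_of_lt (by positivity) (by exact_mod_cast hmltn i)
                  have e3 : ((((af i - af k).val:ℕ):ℤ)) + (mf i:ℤ) = ((mf k:ℕ):ℤ) := by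
                    exact_mod_cast hsum_eq
                  rw [hmod1, e3]
                  exact Int.emod_eq_of_lt (by positivity) (by exact_mod_cast hmltn k)
                have hbound : ((mf k:ℕ):ℝ) + xf i + xf k < n := by
                  linarith [hx1 i, hx1 k, hmkcast2]
                have e : ((((((af i).val + mf i:ℕ))):ℝ) + xf i)/n
                    = (((((af i).val + mf i : ℕ):ℤ):ℝ) + xf i)/n := by push_cast; ring
                rw [e, hσf k, hΛf k,
                  comp2 n hnpos ((af k).val) (mf k) (mf k) (((af i).val + mf i : ℕ):ℤ) (xf i) (xf k)
                    (hx0 k) (le_of_lt (hx0 i)) hMeq hbound]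
                push_neg
                linarith [hxik]
              exact hno (hss.1 (hRend i))
            · have hmm : (af i - af k).val + mf i < mf k := lt_of_le_of_ne hsum hsum_eq
              have hT := hM3 k i
              have hmem_ak : af k ∈ {j | B k j ∧ ¬ B i j} := by
                refine ⟨hBi_ai k, ?_⟩
                intro hc
                have hv := (hrep i _).mp hc
                rw [VN hδ0] at hv
                omega
              have hmem_bk : (af k + ⟨mf k, hmltn k⟩) ∈ {j | B k j ∧ ¬ B i j} := by
                refine ⟨(hrep k _).mpr (VA1 (af k) (mf k) (hmltn k)).le, ?_⟩
                intro hc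
                have hv := (hrep i _).mp hc
                rw [VA2, VN hδ0] at hv
                have e4 : (n - (af i - af k).val + mf k) % n = mf k - (af i - af k).val := by
                  have h5 : n - (af i - af k).val + mf k = n + (mf k - (af i - af k).val) := by omega
                  rw [h5, Nat.add_mod_left]
                  exact Nat.mod_eq_of_lt (by omega)
                rw [e4] at hv
                omega
              rcases dichotomy hT hmem_ak hmem_bk with hside | hside
              · have hmem_ai := hside (af i) (by
                  rw [Fin.le_def, VA1]
                  exact hδle)
                exact hmem_ai.2 (hBi_ai i)
              · have hbk1 : (af k + ⟨mf k, hmltn k⟩) + 1 - (af k + ⟨mf k, hmltn k⟩) = (1 : Fin n) := by open Fin.CommRing in ring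
                have hvnbk : ((af k + ⟨mf k, hmltn k⟩) - af k).val ≠ 0 := by
                  rw [VA1]; omega
                have hmem_bk1 := hside ((af k + ⟨mf k, hmltn k⟩) + 1) (by
                  rw [Fin.le_def, hbk1, Fin.val_one', one_mod hn2, VN hvnbk, VA1]
                  omega)
                have hv := (hrep k _).mp hmem_bk1.1
                have e5 : (af k + ⟨mf k, hmltn k⟩) + 1 - af k = ((af k + ⟨mf k, hmltn k⟩) - af k) + 1 := by open Fin.CommRing in ring
                rw [e5] at hv
                have e6 : (((af k + ⟨mf k, hmltn k⟩) - af k) + 1).val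
                    = ((af k + ⟨mf k, hmltn k⟩) - af k).val + 1 := by
                  rw [Fin.add_def, Fin.val_one', one_mod hn2, VA1]
                  exact Nat.mod_eq_of_lt (by omega)
                rw [e6, VA1] at hv
                omega
      · -- incomparable: point witness
        push_neg at hsub
        obtain ⟨j₀, hbi, hbk⟩ := hsub
        have h1 : P j₀ ∈ arcSet (σf i) (Λf i) := (hR3 i j₀).mpr hbi
        have h2 : P j₀ ∉ arcSet (σf k) (Λf k) := fun hc => hbk ((hR3 k j₀).mp hc)
        exact h2 (hss.1 h1)
  exact ⟨σf, Λf, P, hR3, hprop⟩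

theorem reverse {V : Type*} [Fintype V] (E : V → V → Prop)
    (hirr : ∀ v, ¬ E v v)
    (ρ γ : Fin (Fintype.card V) ≃ V) (hM : MatCond (AugM E ρ γ)) :
    IsProperCACatchDigraph E := by
  classical
  rcases Nat.eq_zero_or_pos (Fintype.card V) with hn0 | hnpos
  · have hemp : IsEmpty V := Fintype.card_eq_zero_iff.mp hn0
    exact ⟨fun _ => 0, fun _ => 0, fun _ => 0,
      fun v => (hemp.false v).elim, fun u v => (hemp.false u).elim,
      fun u v => (hemp.false u).elim⟩
  haveI : NeZero (Fintype.card V) := ⟨hnpos.ne'⟩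
  obtain ⟨σf, Λf, P, hR3, hprop⟩ := construct (AugM E ρ γ) hM.1 hM.2.1 hM.2.2.1 hM.2.2.2
    (fun i => ⟨γ.symm (ρ i), Or.inr (by simp)⟩)
  refine ⟨fun v => σf (ρ.symm v), fun v => Λf (ρ.symm v), fun v => P (γ.symm v), ?_, ?_, ?_⟩
  · intro v
    apply (hR3 (ρ.symm v) (γ.symm v)).mpr
    exact Or.inr (by simp)
  · intro u v
    exact hprop (ρ.symm u) (ρ.symm v)
  · intro u v
    have hBuv : AugM E ρ γ (ρ.symm u) (γ.symm v) ↔ (E u v ∨ u = v) := by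
      unfold AugM
      simp
    constructor
    · intro he
      refine ⟨fun heq => hirr v (heq ▸ he), ?_⟩
      exact (hR3 _ _).mpr (hBuv.mpr (Or.inl he))
    · rintro ⟨hne, harc⟩
      rcases hBuv.mp ((hR3 _ _).mp harc) with h | h
      · exact h
      · exact absurd h hne

end CB

/-- a simple digraph is a proper circular-arc catch digraph iff
its augmented adjacency matrix can be brought, by independent row and column
permutations, to a matrix satisfying the three conditions. -/
theorem stmt_15 {V : Type*} [Fintype V] (E : V → V → Prop)
    (hirr : ∀ v, ¬ E v v) :
    IsProperCACatchDigraph E ↔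
      ∃ ρ γ : Fin (Fintype.card V) ≃ V, MatCond (AugM E ρ γ) := by
  constructor
  · intro h
    exact CB.forward E hirr h
  · rintro ⟨ρ, γ, hM⟩
    exact CB.reverse E hirr ρ γ hM
end

section
/- An oriented digraph G = (V,E) is an oriented proper circular-arc catch digraph if and only if there exists a circular ordering σ of V such that for all vertices u <_σ v <_σ w <_σ x (in the circular order), if uw ∈ E then either (uv ∈ E and vw ∈ E) or (ux ∈ E and xw ∈ E). -/
/-- Four elements of `Fin n` occur in this cyclic order. -/
def Cyc4 {n : ℕ} (i j k l : Fin n) : Prop :=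
  (i < j ∧ j < k ∧ k < l) ∨ (j < k ∧ k < l ∧ l < i) ∨
  (k < l ∧ l < i ∧ i < j) ∨ (l < i ∧ i < j ∧ j < k)



open Fin.NatCast

namespace S16
variable {n : ℕ}

/-- cyclic distance from `i` to `j` -/
def d (i j : Fin n) : ℕ := (j - i).val

theorem d_lt (i j : Fin n) : d i j < n := (j - i).isLt

theorem d_eq (i j : Fin n) :
    d i j = if i.val ≤ j.val then j.val - i.val else j.val + n - i.val := by
  have hi := i.isLt; have hj := j.isLt
  unfold d
  rw [Fin.sub_def]
  simp only
  split_ifs with h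
  · have : n - i.val + j.val = (j.val - i.val) + n := by omega
    rw [this, Nat.add_mod_right, Nat.mod_eq_of_lt (by omega)]
  · rw [Nat.mod_eq_of_lt (by omega)]
    omega

theorem d_self (i : Fin n) : d i i = 0 := by
  have hi := i.isLt; rw [d_eq]; simp

theorem d_eq_zero_iff {i j : Fin n} : d i j = 0 ↔ i = j := by
  have hi := i.isLt; have hj := j.isLt
  rw [d_eq]
  constructor
  · intro h; split_ifs at h <;> [skip; omega]
    exact Fin.ext (by omega)
  · intro h; subst h; simp

/-- triangle: `d i k ≡ d i j + d j k [MOD n]` as a disjunction -/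
theorem d_tri (i j k : Fin n) :
    d i j + d j k = d i k ∨ d i j + d j k = d i k + n := by
  have hi := i.isLt; have hj := j.isLt; have hk := k.isLt
  rw [d_eq, d_eq, d_eq]
  split_ifs <;> omega

theorem d_inj {i j k : Fin n} (h : d i j = d i k) : j = k := by
  have hi := i.isLt; have hj := j.isLt; have hk := k.isLt
  rw [d_eq, d_eq] at h
  apply Fin.ext
  split_ifs at h <;> omega

theorem d_add_nat [NeZero n] (i : Fin n) (t : ℕ) (ht : t < n) :
    d i (i + (t : Fin n)) = t := by
  have hi := i.isLt
  have hv : ((t : Fin n)).val = t := by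
    rw [Fin.val_natCast, Nat.mod_eq_of_lt ht]
  have hadd : (i + (t : Fin n)).val = (i.val + t) % n := by
    rw [Fin.add_def, hv]
  rw [d_eq, hadd]
  rcases Nat.lt_or_ge (i.val + t) n with h | h
  · rw [Nat.mod_eq_of_lt h]; split_ifs <;> omega
  · have h2 : (i.val + t) % n = i.val + t - n := by
      rw [Nat.mod_eq_sub_mod h, Nat.mod_eq_of_lt (by omega)]
    rw [h2]; split_ifs <;> omega

theorem add_d [NeZero n] (i j : Fin n) : i + ((d i j : ℕ) : Fin n) = j := by
  have h1 : d i (i + ((d i j : ℕ) : Fin n)) = d i j := d_add_nat i _ (d_lt i j)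
  exact (d_inj h1)

theorem cyc4_iff [NeZero n] {i j k l : Fin n} :
    Cyc4 i j k l ↔ 0 < d i j ∧ d i j < d i k ∧ d i k < d i l := by
  have hi := i.isLt; have hj := j.isLt; have hk := k.isLt; have hl := l.isLt
  unfold Cyc4
  simp only [Fin.lt_def]
  rw [d_eq, d_eq, d_eq]
  split_ifs <;> omega

end S16

namespace S16
variable {n : ℕ} [NeZero n]

theorem d_add_fin (i c : Fin n) : d i (i + c) = c.val := by
  have := d_add_nat i c.val c.isLt
  rwa [Fin.cast_val_eq_self] at this

theorem sub_d (i c : Fin n) : d (i - c) i = c.val := by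
  have h := d_add_fin (i - c) c
  rwa [sub_add_cancel] at h

variable {F : Fin n → Fin n → Prop}

/-- `Ti F i j` : `j` is in the closed out-neighborhood of `i`. -/
def Ti (F : Fin n → Fin n → Prop) (i j : Fin n) : Prop := F i j ∨ j = i

theorem step1
    (hc : ∀ i j k l, Cyc4 i j k l → F i k → (F i j ∧ F j k) ∨ (F i l ∧ F l k))
    (i : Fin n) :
    (∀ j, Ti F i j) ∨ ∃ s : Fin n, ∃ r : ℕ, r + 2 ≤ n ∧ ∀ j, Ti F i j ↔ d s j ≤ r := by
  classical
  by_cases hfull : ∀ j, Ti F i j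
  · exact Or.inl hfull
  right
  push_neg at hfull
  obtain ⟨j0, hj0⟩ := hfull
  have hn : 0 < n := Fin.pos i
  have ht0lt : d i j0 < n := d_lt i j0
  have ht0pos : 0 < d i j0 := by
    rcases Nat.eq_zero_or_pos (d i j0) with h | h
    · exact absurd (Or.inr (d_eq_zero_iff.mp h).symm) hj0
    · exact h
  have hPfex : ∃ t : ℕ, 0 < t ∧ ¬ Ti F i (i + (t : Fin n)) := by
    refine ⟨d i j0, ht0pos, ?_⟩
    rw [add_d]; exact hj0
  obtain ⟨tf, htfle, htfpos, htfbad, hminf⟩ :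
      ∃ tf : ℕ, tf ≤ d i j0 ∧ 0 < tf ∧ ¬ Ti F i (i + (tf : Fin n)) ∧
        ∀ t : ℕ, 0 < t → t < tf → Ti F i (i + (t : Fin n)) := by
    refine ⟨Nat.find hPfex, Nat.find_le ⟨ht0pos, by rw [add_d]; exact hj0⟩,
      (Nat.find_spec hPfex).1, (Nat.find_spec hPfex).2, ?_⟩
    intro t ht h
    have := Nat.find_min hPfex h
    push_neg at this
    exact this ht
  have htflt : tf < n := lt_of_le_of_lt htfle ht0lt
  have hPbex : ∃ t : ℕ, 0 < t ∧ ¬ Ti F i (i + ((n - t : ℕ) : Fin n)) := by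
    refine ⟨n - d i j0, by omega, ?_⟩
    have h2 : n - (n - d i j0) = d i j0 := by omega
    rw [h2, add_d]; exact hj0
  obtain ⟨tb, htble, htbpos, htbbad, hminb⟩ :
      ∃ tb : ℕ, tb ≤ n - d i j0 ∧ 0 < tb ∧ ¬ Ti F i (i + ((n - tb : ℕ) : Fin n)) ∧
        ∀ t : ℕ, 0 < t → t < tb → Ti F i (i + ((n - t : ℕ) : Fin n)) := by
    refine ⟨Nat.find hPbex, Nat.find_le ⟨by omega, by
        have h2 : n - (n - d i j0) = d i j0 := by omega
        rw [h2, add_d]; exact hj0⟩,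
      (Nat.find_spec hPbex).1, (Nat.find_spec hPbex).2, ?_⟩
    intro t ht h
    have := Nat.find_min hPbex h
    push_neg at this
    exact this ht
  have htblt : tb < n := by omega
  have hsum : tb + tf ≤ n := by
    by_contra hcon
    push_neg at hcon
    exact htbbad (hminf (n - tb) (by omega) (by omega))
  set c : Fin n := (((tb - 1 : ℕ)) : Fin n) with hcdef
  have hcval : c.val = tb - 1 := by
    rw [hcdef, Fin.val_natCast, Nat.mod_eq_of_lt (by omega)]
  refine ⟨i - c, (tb - 1) + (tf - 1), by omega, ?_⟩
  intro j
  have hdsi : d (i - c) i = tb - 1 := by rw [sub_d, hcval]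
  have htlt : d i j < n := d_lt i j
  have hj : i + ((d i j : ℕ) : Fin n) = j := add_d i j
  have htri := d_tri (i - c) i j
  rw [hdsi] at htri
  have hdslt := d_lt (i - c) j
  rcases Nat.lt_or_ge (d i j) tf with hcase | hcase
  · constructor
    · intro _; omega
    · intro _
      rcases Nat.eq_zero_or_pos (d i j) with h0 | h0
      · exact Or.inr (d_eq_zero_iff.mp h0).symm
      · have := hminf (d i j) h0 hcase
        rwa [hj] at this
  · rcases Nat.lt_or_ge (n - tb) (d i j) with hcase2 | hcase2
    · have h1 : Ti F i (i + ((n - (n - d i j) : ℕ) : Fin n)) :=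
        hminb (n - d i j) (by omega) (by omega)
      have h2 : n - (n - d i j) = d i j := by omega
      rw [h2, hj] at h1
      exact ⟨fun _ => by omega, fun _ => h1⟩
    · have hbad : ¬ Ti F i j := by
        intro hTij
        have hjne : j ≠ i := by
          intro h
          rw [h, d_self] at hcase
          omega
        have hFij : F i j := hTij.resolve_right hjne
        rcases Nat.eq_or_lt_of_le hcase with heq | hlt
        · rw [← hj, ← heq] at hTij
          exact htfbad hTij
        · rcases Nat.eq_or_lt_of_le hcase2 with heq2 | hlt2
          · rw [← hj, heq2] at hTij
            exact htbbad hTij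
          · have hcyc : Cyc4 i (i + ((tf : ℕ) : Fin n)) j (i + ((n - tb : ℕ) : Fin n)) := by
              rw [cyc4_iff]
              rw [d_add_nat i tf htflt, d_add_nat i (n - tb) (by omega)]
              exact ⟨htfpos, hlt, hlt2⟩
            rcases hc _ _ _ _ hcyc hFij with ⟨h1, _⟩ | ⟨h1, _⟩
            · exact htfbad (Or.inl h1)
            · exact htbbad (Or.inl h1)
      exact ⟨fun h => absurd h hbad, fun h => by omega⟩

end S16

namespace S16
variable {n : ℕ} [NeZero n] {F : Fin n → Fin n → Prop}

theorem step2
    (hor : ∀ i j, F i j → ¬ F j i)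
    (hc : ∀ i j k l, Cyc4 i j k l → F i k → (F i j ∧ F j k) ∨ (F i l ∧ F l k))
    {u w su sw : Fin n} {ru rw' : ℕ}
    (hu : ∀ j, Ti F u j ↔ d su j ≤ ru)
    (hw : ∀ j, Ti F w j ↔ d sw j ≤ rw')
    (hrun : ru + 2 ≤ n) (hrwn : rw' + 2 ≤ n)
    (huw : u ≠ w)
    (hsub : ∀ j, d su j ≤ ru → d sw j ≤ rw') :
    d sw su = 0 ∨ d sw su + ru = rw' := by
  have hn2 : 2 ≤ n := by omega
  -- A bound
  have hAbound : d sw su + ru ≤ n - 1 := by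
    by_contra hcon
    push_neg at hcon
    have hAlt := d_lt sw su
    set t : ℕ := n - 1 - d sw su with htdef
    have htru : t ≤ ru := by omega
    have hdsut : d su (su + (t : Fin n)) = t := d_add_nat su t (by omega)
    have h1 : d sw (su + (t : Fin n)) ≤ rw' := hsub _ (by omega)
    have htri := d_tri sw su (su + (t : Fin n))
    have hlt := d_lt sw (su + (t : Fin n))
    omega
  have hArw : d sw su + ru ≤ rw' := by
    have hdsut : d su (su + (ru : Fin n)) = ru := d_add_nat su ru (by omega)
    have h1 : d sw (su + (ru : Fin n)) ≤ rw' := hsub _ (by omega)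
    have htri := d_tri sw su (su + (ru : Fin n))
    have hlt := d_lt sw (su + (ru : Fin n))
    omega
  by_contra hcon
  push_neg at hcon
  obtain ⟨hA1, hA2⟩ := hcon
  have hApos : 0 < d sw su := Nat.pos_of_ne_zero hA1
  have hAr : d sw su + ru + 1 ≤ rw' := by omega
  -- u in T_w
  have hβ : d su u ≤ ru := (hu u).mp (Or.inr rfl)
  have hh : d sw u ≤ rw' := hsub u hβ
  have hhval : d sw u = d sw su + d su u := by
    have htri := d_tri sw su u
    omega
  have hFwu : F w u := ((hw u).mpr hh).resolve_right huw
  have hnotTuw : ¬ d su w ≤ ru := by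
    intro h
    exact hor w u hFwu (((hu w).mpr h).resolve_right (fun e => huw e.symm))
  -- γ
  have hγ : d sw w ≤ rw' := (hw w).mp (Or.inr rfl)
  have hγh : d sw w ≠ d sw u := fun e => huw (d_inj e.symm)
  -- outside element
  have hdout : d sw (sw + ((n - 1 : ℕ) : Fin n)) = n - 1 := d_add_nat sw _ (by omega)
  have hFout : ¬ F w (sw + ((n - 1 : ℕ) : Fin n)) := by
    intro h
    have := (hw _).mp (Or.inl h)
    omega
  rcases Nat.lt_or_ge (d sw w) (d sw u) with hcase | hcase
  · -- γ < h : use b2 = su + (ru+1)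
    set b2 : Fin n := su + ((ru + 1 : ℕ) : Fin n) with hb2def
    have hdsub2 : d su b2 = ru + 1 := d_add_nat su (ru + 1) (by omega)
    have hdswb2 : d sw b2 = d sw su + ru + 1 := by
      have htri := d_tri sw su b2
      have hlt := d_lt sw b2
      omega
    have hb2w : b2 ≠ w := by
      intro e; rw [e] at hdswb2; omega
    have hFwb2 : F w b2 := ((hw b2).mpr (by omega)).resolve_right hb2w
    have hcyc : Cyc4 w u b2 (sw + ((n - 1 : ℕ) : Fin n)) := by
      rw [cyc4_iff]
      have t1 := d_tri sw w u
      have t2 := d_tri sw w b2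
      have t3 := d_tri sw w (sw + ((n - 1 : ℕ) : Fin n))
      have l1 := d_lt w u
      have l2 := d_lt w b2
      have l3 := d_lt w (sw + ((n - 1 : ℕ) : Fin n))
      omega
    rcases hc _ _ _ _ hcyc hFwb2 with ⟨_, h2⟩ | ⟨h1, _⟩
    · have := (hu b2).mp (Or.inl h2)
      omega
    · exact hFout h1
  · have hcase' : d sw w > d sw u := by omega
    -- γ > h : use b1 = su - 1
    set b1 : Fin n := su + ((n - 1 : ℕ) : Fin n) with hb1def
    have hdsub1 : d su b1 = n - 1 := d_add_nat su _ (by omega)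
    have hdswb1 : d sw b1 = d sw su - 1 := by
      have htri := d_tri sw su b1
      have hlt := d_lt sw b1
      have hAlt := d_lt sw su
      omega
    have hb1w : b1 ≠ w := by
      intro e; rw [e] at hdswb1; omega
    have hFwb1 : F w b1 := ((hw b1).mpr (by omega)).resolve_right hb1w
    have hcyc : Cyc4 w (sw + ((n - 1 : ℕ) : Fin n)) b1 u := by
      rw [cyc4_iff]
      have t1 := d_tri sw w u
      have t2 := d_tri sw w b1
      have t3 := d_tri sw w (sw + ((n - 1 : ℕ) : Fin n))
      have l1 := d_lt w u
      have l2 := d_lt w b1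
      have l3 := d_lt w (sw + ((n - 1 : ℕ) : Fin n))
      omega
    rcases hc _ _ _ _ hcyc hFwb1 with ⟨h1, _⟩ | ⟨_, h2⟩
    · exact hFout h1
    · have := (hu b1).mp (Or.inl h2)
      omega

end S16

namespace S16
variable {n : ℕ} [NeZero n] {F : Fin n → Fin n → Prop}

theorem one_val (hn2 : 2 ≤ n) : ((1 : Fin n)).val = 1 := by
  rw [← Nat.cast_one, Fin.val_natCast, Nat.mod_eq_of_lt (by omega)]

theorem step2b
    (hc : ∀ i j k l, Cyc4 i j k l → F i k → (F i j ∧ F j k) ∨ (F i l ∧ F l k))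
    {v : Fin n} (hfull : ∀ j, j ≠ v → F v j) (hn2 : 2 ≤ n) :
    ∃ c : Fin n, ∀ u, u ≠ v → (Ti F u c ∨ Ti F u (c + 1)) := by
  classical
  set D : Finset (Fin n) :=
    Finset.univ.filter (fun k => k ≠ v ∧ ∀ j, j ≠ v → d v j < d v k → F j k) with hD
  have hmem : ∀ k, k ∈ D ↔ (k ≠ v ∧ ∀ j, j ≠ v → d v j < d v k → F j k) := by
    intro k; rw [hD, Finset.mem_filter]; simp
  have hDne : D.Nonempty := by
    refine ⟨v + 1, (hmem _).mpr ⟨?_, ?_⟩⟩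
    · intro e
      have h1 : d v (v + 1) = 1 := by
        have := d_add_fin v 1; rwa [one_val hn2] at this
      rw [e, d_self] at h1; omega
    · intro j hj hlt
      have h1 : d v (v + 1) = 1 := by
        have := d_add_fin v 1; rwa [one_val hn2] at this
      have : d v j = 0 := by omega
      exact absurd (d_eq_zero_iff.mp this).symm hj
  obtain ⟨a, haD, hamax⟩ := Finset.exists_max_image D (fun k => d v k) hDne
  obtain ⟨hav, haL⟩ := (hmem a).mp haD
  have hapos : 0 < d v a := by
    rcases Nat.eq_zero_or_pos (d v a) with h | h
    · exact absurd (d_eq_zero_iff.mp h).symm hav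
    · exact h
  have hda1 : d a (a + 1) = 1 := by
    have := d_add_fin a 1; rwa [one_val hn2] at this
  refine ⟨a, ?_⟩
  intro u huv
  have hupos : 0 < d v u := by
    rcases Nat.eq_zero_or_pos (d v u) with h | h
    · exact absurd (d_eq_zero_iff.mp h).symm huv
    · exact h
  have hult := d_lt v u
  have halt := d_lt v a
  rcases lt_trichotomy (d v u) (d v a) with hcase | hcase | hcase
  · exact Or.inl (Or.inl (haL u huv hcase))
  · exact Or.inl (Or.inr (d_inj (hcase.symm ▸ rfl : d v a = d v u)))
  · -- d v u > d v a
    have hda1v : d v (a + 1) = d v a + 1 := by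
      have htri := d_tri v a (a + 1)
      have hlt := d_lt v (a + 1)
      rw [hda1] at htri
      omega
    rcases Nat.eq_or_lt_of_le hcase with heq | hlt2
    · -- u = a + 1
      have : d v u = d v (a + 1) := by omega
      exact Or.inr (Or.inr (d_inj this.symm))
    · -- strict : use (*)
      have hk'v : (a + 1) ≠ v := by
        intro e
        rw [e, d_self] at hda1v; omega
      have hnotD : (a + 1) ∉ D := by
        intro h
        have := hamax _ h
        omega
      rw [hmem] at hnotD
      push_neg at hnotD
      obtain ⟨j0, hj0v, hj0lt, hj0nF⟩ := hnotD hk'v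
      have hj0pos : 0 < d v j0 := by
        rcases Nat.eq_zero_or_pos (d v j0) with h | h
        · exact absurd (d_eq_zero_iff.mp h).symm hj0v
        · exact h
      have hcyc : Cyc4 v j0 (a + 1) u := by
        rw [cyc4_iff]
        omega
      rcases hc _ _ _ _ hcyc (hfull _ hk'v) with ⟨_, h2⟩ | ⟨_, h2⟩
      · exact absurd h2 hj0nF
      · exact Or.inr (Or.inl h2)

end S16

namespace S16
variable {n : ℕ} [NeZero n] {F : Fin n → Fin n → Prop}

theorem step2_lt
    (hor : ∀ i j, F i j → ¬ F j i)
    {u w su sw : Fin n} {ru rw' : ℕ}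
    (hu : ∀ j, Ti F u j ↔ d su j ≤ ru)
    (hw : ∀ j, Ti F w j ↔ d sw j ≤ rw')
    (hrwn : rw' + 2 ≤ n)
    (huw : u ≠ w)
    (hsub : ∀ j, d su j ≤ ru → d sw j ≤ rw') :
    ru < rw' := by
  have hru : ru ≤ n - 1 := by
    by_contra hcon
    push_neg at hcon
    have h1 : d su w ≤ ru := by have := d_lt su w; omega
    exact hor w u (((hw u).mpr (hsub u (by have := d_lt su u; omega))).resolve_right huw)
      (((hu w).mpr h1).resolve_right (fun e => huw e.symm))
  have hAbound : d sw su + ru ≤ n - 1 := by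
    by_contra hcon
    push_neg at hcon
    have hAlt := d_lt sw su
    set t : ℕ := n - 1 - d sw su with htdef
    have hdsut : d su (su + (t : Fin n)) = t := d_add_nat su t (by omega)
    have h1 : d sw (su + (t : Fin n)) ≤ rw' := hsub _ (by omega)
    have htri := d_tri sw su (su + (t : Fin n))
    have hlt := d_lt sw (su + (t : Fin n))
    omega
  have hArw : d sw su + ru ≤ rw' := by
    have hdsut : d su (su + (ru : Fin n)) = ru := d_add_nat su ru (by omega)
    have h1 : d sw (su + (ru : Fin n)) ≤ rw' := hsub _ (by omega)
    have htri := d_tri sw su (su + (ru : Fin n))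
    have hlt := d_lt sw (su + (ru : Fin n))
    omega
  rcases Nat.eq_zero_or_pos (d sw su) with hA | hA
  · -- same start
    rcases Nat.eq_or_lt_of_le hArw with heq | hlt
    · -- equal balls : contradiction with orientation
      exfalso
      have hsueq : sw = su := d_eq_zero_iff.mp hA
      have hFwu : F w u := ((hw u).mpr (hsub u ((hu u).mp (Or.inr rfl)))).resolve_right huw
      have hFuw : F u w := ((hu w).mpr (by
          have := (hw w).mp (Or.inr rfl)
          rw [hsueq] at this
          omega)).resolve_right (fun e => huw e.symm)
      exact hor u w hFuw hFwu
    · omega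
  · omega

theorem comb_main
    (hor : ∀ i j, F i j → ¬ F j i)
    (hc : ∀ i j k l, Cyc4 i j k l → F i k → (F i j ∧ F j k) ∨ (F i l ∧ F l k)) :
    ∃ (s : Fin n → Fin n) (r : Fin n → ℕ),
      (∀ i, r i ≤ n - 1) ∧
      (∀ i j, Ti F i j ↔ d (s i) j ≤ r i) ∧
      (∀ u w, u ≠ w → (∀ j, d (s u) j ≤ r u → d (s w) j ≤ r w) →
        r u < r w ∧
        (d (s w) (s u) = 0 ∨ d (s w) (s u) + r u = r w ∨
         ∃ c : Fin n, d (s u) c + 1 ≤ r u ∧ d (s w) c = n - 1)) := by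
  classical
  have hn : 0 < n := Nat.pos_of_ne_zero (NeZero.ne n)
  by_cases hex : ∃ v, ∀ j, Ti F v j
  · obtain ⟨v, hv⟩ := hex
    rcases Nat.lt_or_ge n 2 with hn1 | hn2
    · -- n = 1
      have hall : ∀ a b : Fin n, a = b := by
        intro a b
        have h1 := a.isLt; have h2 := b.isLt
        apply Fin.ext; omega
      refine ⟨fun _ => v, fun _ => 0, fun i => by show (0:ℕ) ≤ n - 1; omega, ?_, ?_⟩
      · intro i j
        constructor
        · intro _
          have h1 := d_lt ((fun _ => v) i) j
          omega
        · intro _; exact Or.inr (hall j i)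
      · intro u w huw _
        exact absurd (hall u w) huw
    · -- n ≥ 2, unique full vertex v
      have hfull' : ∀ j, j ≠ v → F v j := fun j hj => (hv j).resolve_right hj
      obtain ⟨c, hcprop⟩ := step2b hc hfull' hn2
      have hnotfull : ∀ u, u ≠ v → ¬ (∀ j, Ti F u j) := by
        intro u huv hfu
        exact hor v u (hfull' u huv) ((hfu v).resolve_right (fun e => huv e.symm))
      have H : ∀ i : Fin n, ∃ p : Fin n × ℕ,
          (i = v ∧ p.1 = c + 1 ∧ p.2 = n - 1) ∨
          (i ≠ v ∧ p.2 + 2 ≤ n ∧ ∀ j, Ti F i j ↔ d p.1 j ≤ p.2) := by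
        intro i
        by_cases hiv : i = v
        · exact ⟨(c + 1, n - 1), Or.inl ⟨hiv, rfl, rfl⟩⟩
        · obtain ⟨s0, r0, h1, h2⟩ := (step1 hc i).resolve_left (hnotfull i hiv)
          exact ⟨(s0, r0), Or.inr ⟨hiv, h1, h2⟩⟩
      choose p hp using H
      set s : Fin n → Fin n := fun i => (p i).1 with hs
      set r : Fin n → ℕ := fun i => (p i).2 with hr
      have hsv : s v = c + 1 := by
        rcases hp v with ⟨_, h1, _⟩ | ⟨h1, _⟩
        · exact h1
        · exact absurd rfl h1
      have hrv : r v = n - 1 := by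
        rcases hp v with ⟨_, _, h1⟩ | ⟨h1, _⟩
        · exact h1
        · exact absurd rfl h1
      have hne : ∀ i, i ≠ v → (r i + 2 ≤ n ∧ ∀ j, Ti F i j ↔ d (s i) j ≤ r i) := by
        intro i hiv
        rcases hp i with ⟨h1, _⟩ | ⟨_, h1, h2⟩
        · exact absurd h1 hiv
        · exact ⟨h1, h2⟩
      -- useful d facts around c
      have hdc1c : d (c + 1) c = n - 1 := by
        have hda1 : d c (c + 1) = 1 := by
          have := d_add_fin c 1; rwa [one_val hn2] at this
        have htri := d_tri (c + 1) c (c + 1)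
        have h0 : d (c + 1) (c + 1) = 0 := d_self _
        have hlt := d_lt (c + 1) c
        omega
      have hrep : ∀ i j, Ti F i j ↔ d (s i) j ≤ r i := by
        intro i j
        by_cases hiv : i = v
        · subst hiv
          rw [hsv, hrv]
          constructor
          · intro _; have := d_lt (c + 1) j; omega
          · intro _; exact hv j
        · exact (hne i hiv).2 j
      refine ⟨s, r, ?_, hrep, ?_⟩
      · intro i
        by_cases hiv : i = v
        · rw [hiv, hrv]
        · have := (hne i hiv).1; omega
      · intro u w huw hsub
        by_cases huv : u = v
        · -- impossible : ball of w would be everything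
          exfalso
          have hwv : w ≠ v := fun e => huw (huv.trans e.symm)
          have hrw := (hne w hwv).1
          have h1 : d (s w) (s w + ((n - 1 : ℕ) : Fin n)) = n - 1 :=
            d_add_nat _ _ (by omega)
          have h2 := hsub (s w + ((n - 1 : ℕ) : Fin n))
            (by
              have h3 : r u = n - 1 := by rw [huv, hrv]
              have h4 := d_lt (s u) (s w + ((n - 1 : ℕ) : Fin n))
              omega)
          omega
        · by_cases hwv : w = v
          · obtain ⟨hrun, hurep⟩ := hne u huv
            rw [hwv, hsv, hrv]
            constructor
            · omega
            · rcases hcprop u huv with hTc | hTc1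
              · -- c in T_u
                have hx : d (s u) c ≤ r u := (hrep u c).mp hTc
                rcases Nat.eq_or_lt_of_le hx with heq | hlt
                · -- right end at c
                  right; left
                  have htri := d_tri (c + 1) (s u) c
                  have h1 := d_lt (c + 1) (s u)
                  have h2 := d_lt (s u) c
                  omega
                · -- cover
                  right; right
                  exact ⟨c, by omega, hdc1c⟩
              · have hx : d (s u) (c + 1) ≤ r u := (hrep u (c + 1)).mp hTc1
                rcases Nat.eq_zero_or_pos (d (s u) (c + 1)) with heq | hpos
                · left
                  have : s u = c + 1 := d_eq_zero_iff.mp heq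
                  rw [this, d_self]
                · -- c in T_u as well, with room
                  right; right
                  refine ⟨c, ?_, hdc1c⟩
                  have hda1 : d c (c + 1) = 1 := by
                    have := d_add_fin c 1; rwa [one_val hn2] at this
                  have htri := d_tri (s u) c (c + 1)
                  have h2 := d_lt (s u) c
                  omega
          · obtain ⟨hrun, hurep⟩ := hne u huv
            obtain ⟨hrwn, hwrep⟩ := hne w hwv
            refine ⟨step2_lt hor hurep hwrep hrwn huw hsub, ?_⟩
            rcases step2 hor hc hurep hwrep hrun hrwn huw hsub with h | h
            · exact Or.inl h
            · exact Or.inr (Or.inl h)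
  · -- no full vertex
    have H : ∀ i : Fin n, ∃ p : Fin n × ℕ,
        p.2 + 2 ≤ n ∧ ∀ j, Ti F i j ↔ d p.1 j ≤ p.2 := by
      intro i
      obtain ⟨s0, r0, h1, h2⟩ := (step1 hc i).resolve_left (fun h => hex ⟨i, h⟩)
      exact ⟨(s0, r0), h1, h2⟩
    choose p hp using H
    refine ⟨fun i => (p i).1, fun i => (p i).2,
      fun i => by show (p i).2 ≤ n - 1; have := (hp i).1; omega,
      fun i => (hp i).2, ?_⟩
    intro u w huw hsub
    refine ⟨step2_lt hor (hp u).2 (hp w).2 (hp w).1 huw hsub, ?_⟩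
    rcases step2 hor hc (hp u).2 (hp w).2 (hp u).1 (hp w).1 huw hsub with h | h
    · exact Or.inl h
    · exact Or.inr (Or.inl h)

end S16

namespace S16

theorem mem_arcSet {a l x : ℝ} : x ∈ arcSet a l ↔ arcMem a l x := Iff.rfl

variable {n : ℕ} [NeZero n]

theorem cast_d (i j : Fin n) : ∃ K : ℤ, ((j.val : ℝ) - i.val) = d i j + K * n := by
  have hi := i.isLt; have hj := j.isLt
  rcases le_or_gt i.val j.val with h | h
  · refine ⟨0, ?_⟩
    have hd : d i j = j.val - i.val := by rw [d_eq]; simp [h]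
    rw [hd]
    push_cast [h]
    ring
  · refine ⟨-1, ?_⟩
    have hd : d i j = j.val + n - i.val := by rw [d_eq]; simp [h.not_ge]
    rw [hd]
    have h2 : i.val ≤ j.val + n := by omega
    push_cast [h2]
    ring

theorem fract_key (i j : Fin n) (x : ℝ)
    (h0 : 0 ≤ (d i j : ℝ) / n + x) (h1 : (d i j : ℝ) / n + x < 1) :
    Int.fract ((j.val : ℝ) / n - (i.val : ℝ) / n + x) = (d i j : ℝ) / n + x := by
  have hn : (0 : ℝ) < n := by
    have := Nat.pos_of_ne_zero (NeZero.ne n); exact_mod_cast this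
  obtain ⟨K, hK⟩ := cast_d i j
  have heq : (j.val : ℝ) / n - (i.val : ℝ) / n + x = ((d i j : ℝ) / n + x) + K := by
    field_simp
    linarith [hK]
  rw [heq, Int.fract_add_intCast, Int.fract_eq_self.mpr ⟨h0, h1⟩]

theorem fract_neg_small (y : ℝ) (h0 : -1 ≤ y) (h1 : y < 0) : Int.fract y = y + 1 := by
  have h : Int.fract (y + 1) = y + 1 := Int.fract_eq_self.mpr ⟨by linarith, by linarith⟩
  have h2 : Int.fract (y + 1) = Int.fract y := by
    rw [show y + 1 = y + ((1 : ℤ) : ℝ) by push_cast; ring, Int.fract_add_intCast]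
  exact h2.symm.trans h

set_option maxHeartbeats 1000000 in
theorem real_phase (s : Fin n → Fin n) (r : Fin n → ℕ)
    (hP1 : ∀ i, r i ≤ n - 1)
    (hP3 : ∀ u w, u ≠ w → (∀ j, d (s u) j ≤ r u → d (s w) j ≤ r w) →
        r u < r w ∧ (d (s w) (s u) = 0 ∨ d (s w) (s u) + r u = r w ∨
         ∃ c : Fin n, d (s u) c + 1 ≤ r u ∧ d (s w) c = n - 1)) :
    ∃ A L P : Fin n → ℝ,
      (∀ i j, arcMem (A i) (L i) (P j) ↔ d (s i) j ≤ r i) ∧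
      (∀ u w, ¬ arcSet (A u) (L u) ⊂ arcSet (A w) (L w)) := by
  have hnn : 0 < n := Nat.pos_of_ne_zero (NeZero.ne n)
  have hn : (0 : ℝ) < n := by exact_mod_cast hnn
  have hn1 : (1 : ℝ) ≤ n := by exact_mod_cast hnn
  set o : Fin n → ℝ := fun i => ((n : ℝ) - r i) / (4 * n ^ 2) with ho
  set A : Fin n → ℝ := fun i => ((s i).val : ℝ) / n - o i with hA
  set L : Fin n → ℝ := fun i => (r i : ℝ) / n + 2 * o i with hL
  set P : Fin n → ℝ := fun j => (j.val : ℝ) / n with hP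
  have hrR : ∀ i, (r i : ℝ) ≤ (n : ℝ) - 1 := by
    intro i
    have h1 : r i + 1 ≤ n := by have := hP1 i; omega
    have h2 : ((r i : ℕ) : ℝ) + 1 ≤ (n : ℝ) := by exact_mod_cast h1
    linarith
  have hr0 : ∀ i, (0 : ℝ) ≤ r i := fun i => Nat.cast_nonneg _
  have ho_pos : ∀ i, 0 < o i := by
    intro i
    have := hrR i
    apply div_pos (by linarith) (by positivity)
  have ho_le : ∀ i, o i ≤ 1 / (4 * n) := by
    intro i
    rw [ho]
    rw [div_le_div_iff₀ (by positivity) (by positivity)]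
    have := hr0 i
    nlinarith
  have ho_ltn : ∀ i, o i < 1 / (2 * n) := by
    intro i
    have h1 : (1 : ℝ) / (4 * n) < 1 / (2 * n) := by
      rw [div_lt_div_iff₀ (by positivity) (by positivity)]
      nlinarith
    linarith [ho_le i]
  have hinv : (1 : ℝ) / (2 * n) < 1 / n := by
    rw [div_lt_div_iff₀ (by positivity) (by positivity)]
    nlinarith
  have hhalf : (1 : ℝ) / (2 * n) + 1 / (2 * n) = 1 / n := by
    field_simp
    ring
  have hL_pos : ∀ i, 0 < L i := by
    intro i
    have := ho_pos i; have := hr0 i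
    rw [hL]
    have h1 : (0:ℝ) ≤ (r i : ℝ) / n := by positivity
    simp only
    linarith
  have hL_lt1 : ∀ i, L i < 1 := by
    intro i
    rw [hL]
    simp only
    have h1 : (r i : ℝ) / n ≤ ((n : ℝ) - 1) / n := by gcongr; exact hrR i
    have h2 : ((n : ℝ) - 1) / n = 1 - 1 / n := by field_simp
    have h3 := ho_ltn i
    have := hinv
    linarith
  -- membership
  have hmem : ∀ i j, arcMem (A i) (L i) (P j) ↔ d (s i) j ≤ r i := by
    intro i j
    have hdlt := d_lt (s i) j
    have hdR : (d (s i) j : ℝ) ≤ (n : ℝ) - 1 := by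
      have h1 : d (s i) j + 1 ≤ n := by omega
      have h2 : ((d (s i) j : ℕ) : ℝ) + 1 ≤ (n : ℝ) := by exact_mod_cast h1
      linarith
    have hfr : Int.fract (P j - A i) = (d (s i) j : ℝ) / n + o i := by
      have he : P j - A i = (j.val : ℝ) / n - ((s i).val : ℝ) / n + o i := by
        simp only [hP, hA]; ring
      rw [he]
      refine fract_key _ _ _ ?_ ?_
      · have h1 : (0:ℝ) ≤ (d (s i) j : ℝ) / n := by positivity
        linarith [ho_pos i]
      · have h1 : (d (s i) j : ℝ) / n ≤ ((n : ℝ) - 1) / n := by gcongr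
        have h2 : ((n : ℝ) - 1) / n = 1 - 1 / n := by field_simp
        have h3 := ho_ltn i
        linarith [hinv]
    show Int.fract (P j - A i) ≤ L i ↔ _
    rw [hfr, hL]
    simp only
    constructor
    · intro h
      by_contra hcon
      push_neg at hcon
      have hc' : (r i : ℝ) + 1 ≤ (d (s i) j : ℝ) := by exact_mod_cast hcon
      have h1 : ((r i : ℝ) + 1) / n ≤ (d (s i) j : ℝ) / n := by gcongr
      have h2 : ((r i : ℝ) + 1) / n = (r i : ℝ) / n + 1 / n := by ring
      have h3 := ho_ltn i
      linarith [hinv]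
    · intro h
      have hc : (d (s i) j : ℝ) ≤ (r i : ℝ) := by exact_mod_cast h
      have h1 : (d (s i) j : ℝ) / n ≤ (r i : ℝ) / n := by gcongr
      linarith [ho_pos i]
  refine ⟨A, L, P, hmem, ?_⟩
  intro u w hss
  by_cases hTsub : ∀ j, d (s u) j ≤ r u → d (s w) j ≤ r w
  · rcases eq_or_ne u w with rfl | huw
    · exact ssubset_irrefl _ hss
    · obtain ⟨hrlt, hdisj⟩ := hP3 u w huw hTsub
      have hrltR : (r u : ℝ) < r w := by exact_mod_cast hrlt
      have homono : o w < o u := by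
        have h1 : o u - o w = ((r w : ℝ) - r u) / (4 * n ^ 2) := by rw [ho]; ring
        have h2 : (0:ℝ) < ((r w : ℝ) - r u) / (4 * n ^ 2) := by
          apply div_pos (by linarith) (by positivity)
        linarith
      have hrwR := hrR w
      have hrwn : (r w : ℝ) / n ≤ 1 - 1 / n := by
        have h1 : (r w : ℝ) / n ≤ ((n : ℝ) - 1) / n := by gcongr
        have h2 : ((n : ℝ) - 1) / n = 1 - 1 / n := by field_simp
        linarith
      rcases hdisj with h0 | h0 | ⟨c, hcu, hcw⟩
      · -- shared left end : witness A u
        have hx1 : arcMem (A u) (L u) (A u) := by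
          show Int.fract (A u - A u) ≤ L u
          rw [sub_self, Int.fract_zero]
          exact (hL_pos u).le
        have hx2 : ¬ arcMem (A w) (L w) (A u) := by
          show ¬ Int.fract (A u - A w) ≤ L w
          have hsw : s w = s u := d_eq_zero_iff.mp h0
          have he : A u - A w = o w - o u := by
            simp only [hA]
            rw [hsw]
            ring
          have hfe : (1:ℝ) / (2 * n) ≤ 1 / 2 := by
            rw [div_le_div_iff₀ (by positivity) (by norm_num)]
            nlinarith
          have h3 := ho_ltn u; have h4 := ho_ltn w
          rw [he, fract_neg_small _ (by linarith [ho_pos w]) (by linarith)]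
          rw [hL]
          simp only
          push_neg
          linarith
        exact hx2 (mem_arcSet.mp (hss.subset (mem_arcSet.mpr hx1)))
      · -- shared right end : witness A u + L u
        have hx1 : arcMem (A u) (L u) (A u + L u) := by
          show Int.fract (A u + L u - A u) ≤ L u
          rw [show A u + L u - A u = L u by ring,
            Int.fract_eq_self.mpr ⟨(hL_pos u).le, hL_lt1 u⟩]
        have hx2 : ¬ arcMem (A w) (L w) (A u + L u) := by
          show ¬ Int.fract (A u + L u - A w) ≤ L w
          have he : A u + L u - A w =
              ((s u).val : ℝ) / n - ((s w).val : ℝ) / n + ((r u : ℝ) / n + o u + o w) := by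
            simp only [hA, hL]; ring
          have hdval : (d (s w) (s u) : ℝ) = (r w : ℝ) - r u := by
            have : (( d (s w) (s u) + r u : ℕ) : ℝ) = ((r w : ℕ) : ℝ) := by rw [h0]
            push_cast at this
            linarith
          have hval : (d (s w) (s u) : ℝ) / n + ((r u : ℝ) / n + o u + o w) =
              (r w : ℝ) / n + o u + o w := by
            rw [hdval]; ring
          rw [he, fract_key _ _ _ (by
              rw [hval]
              have h1 : (0:ℝ) ≤ (r w : ℝ) / n := by positivity
              linarith [ho_pos u, ho_pos w]) (by
              rw [hval]
              have h3 := ho_ltn u; have h4 := ho_ltn w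
              linarith [hinv]), hval, hL]
          simp only
          push_neg
          linarith
        exact hx2 (mem_arcSet.mp (hss.subset (mem_arcSet.mpr hx1)))
      · -- cover : witness midpoint of the gap at c
        have hn2 : 2 ≤ n := by have := hP1 u; omega
        have hdcu := d_lt (s u) c
        have hcuR : (d (s u) c : ℝ) + 1 ≤ (r u : ℝ) := by exact_mod_cast hcu
        have hcwR : (d (s w) c : ℝ) = (n : ℝ) - 1 := by
          rw [hcw]
          push_cast [Nat.cast_sub (by omega : 1 ≤ n)]
          ring
        set x : ℝ := (c.val : ℝ) / n + 1 / (2 * n) with hx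
        have hx1 : arcMem (A u) (L u) x := by
          show Int.fract (x - A u) ≤ L u
          have he : x - A u = (c.val : ℝ) / n - ((s u).val : ℝ) / n + (1 / (2 * n) + o u) := by
            simp only [hx, hA]; ring
          have hduR : (d (s u) c : ℝ) / n ≤ ((r u : ℝ) - 1) / n := by gcongr; linarith
          have hruRn : ((r u : ℝ) - 1) / n = (r u : ℝ) / n - 1 / n := by ring
          rw [he, fract_key _ _ _ (by
              have h1 : (0:ℝ) ≤ (d (s u) c : ℝ) / n := by positivity
              have h2 : (0:ℝ) < 1 / (2 * n) := by positivity
              linarith [ho_pos u]) (by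
              have h1 : (d (s u) c : ℝ) ≤ (n : ℝ) - 1 := by
                have hh : d (s u) c + 1 ≤ n := by omega
                have hh2 : ((d (s u) c : ℕ) : ℝ) + 1 ≤ (n : ℝ) := by exact_mod_cast hh
                linarith
              have h2 : (d (s u) c : ℝ) / n ≤ ((n:ℝ) - 1) / n := by gcongr
              have h3 : ((n : ℝ) - 1) / n = 1 - 1 / n := by field_simp
              have h4 := ho_ltn u
              linarith [hinv]), hL]
          simp only
          have := ho_pos u
          linarith [hinv]
        have hx2 : ¬ arcMem (A w) (L w) x := by
          show ¬ Int.fract (x - A w) ≤ L w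
          have he : x - A w = (c.val : ℝ) / n - ((s w).val : ℝ) / n + (1 / (2 * n) + o w) := by
            simp only [hx, hA]; ring
          have hval : (d (s w) c : ℝ) / n + (1 / (2 * n) + o w) =
              1 - 1 / n + 1 / (2 * n) + o w := by
            rw [hcwR]; field_simp; ring
          rw [he, fract_key _ _ _ (by
              have h1 : (0:ℝ) ≤ (d (s w) c : ℝ) / n := by positivity
              have h2 : (0:ℝ) < 1 / (2 * n) := by positivity
              linarith [ho_pos w]) (by
              rw [hval]
              have h4 := ho_ltn w
              linarith [hinv]), hval, hL]
          simp only
          push_neg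
          have h4 := ho_ltn w
          linarith
        exact hx2 (mem_arcSet.mp (hss.subset (mem_arcSet.mpr hx1)))
  · push_neg at hTsub
    obtain ⟨j, h1, h2⟩ := hTsub
    have h4 : P j ∈ arcSet (A u) (L u) := mem_arcSet.mpr ((hmem u j).mpr h1)
    have h3 := (hmem w j).mp (mem_arcSet.mp (hss.subset h4))
    omega

end S16

namespace S16

theorem fract_sub_fract (U W : ℝ) :
    Int.fract (U - W) = Int.fract (Int.fract U - Int.fract W) := by
  rw [Int.fract_eq_fract]
  refine ⟨⌊U⌋ - ⌊W⌋, ?_⟩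
  unfold Int.fract
  push_cast
  ring

theorem fract_add_fract' (U W : ℝ) :
    Int.fract (U + W) = Int.fract (Int.fract U + Int.fract W) := by
  rw [Int.fract_eq_fract]
  refine ⟨⌊U⌋ + ⌊W⌋, ?_⟩
  unfold Int.fract
  push_cast
  ring

theorem seg_half {A' L' x y : ℝ} (hx : arcMem A' L' x) (hy : arcMem A' L' y)
    (hab : Int.fract (x - A') ≤ Int.fract (y - A')) :
    ∀ z, Int.fract (z - x) ≤ Int.fract (y - x) → arcMem A' L' z := by
  intro z hz
  have hb1 : Int.fract (y - A') < 1 := Int.fract_lt_one _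
  have ha0 : 0 ≤ Int.fract (x - A') := Int.fract_nonneg _
  have hz0 : 0 ≤ Int.fract (z - x) := Int.fract_nonneg _
  have hyx : Int.fract (y - x) = Int.fract (y - A') - Int.fract (x - A') := by
    rw [show y - x = (y - A') - (x - A') by ring, fract_sub_fract,
      Int.fract_eq_self.mpr ⟨by linarith, by linarith⟩]
  rw [hyx] at hz
  show Int.fract (z - A') ≤ L'
  have hy' : Int.fract (y - A') ≤ L' := hy
  have hsum0 : 0 ≤ Int.fract (z - x) + Int.fract (x - A') := by linarith
  have hsum1 : Int.fract (z - x) + Int.fract (x - A') < 1 := by linarith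
  have h1 : Int.fract (z - A') = Int.fract (z - x) + Int.fract (x - A') := by
    rw [show z - A' = (z - x) + (x - A') by ring, fract_add_fract',
      Int.fract_eq_self.mpr ⟨hsum0, hsum1⟩]
  rw [h1]
  linarith

theorem seg {A' L' x y : ℝ} (hx : arcMem A' L' x) (hy : arcMem A' L' y) :
    (∀ z, Int.fract (z - x) ≤ Int.fract (y - x) → arcMem A' L' z) ∨
    (∀ z, Int.fract (z - y) ≤ Int.fract (x - y) → arcMem A' L' z) := by
  rcases le_total (Int.fract (x - A')) (Int.fract (y - A')) with h | h
  · exact Or.inl (seg_half hx hy h)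
  · exact Or.inr (seg_half hy hx h)

end S16

namespace S16

theorem contain {Au Lu Bv Lv : ℝ} {s t m : ℝ}
    (hproper1 : ¬ arcSet Bv Lv ⊂ arcSet Au Lu)
    (hs : arcMem Au Lu s)
    (hseg : ∀ z, Int.fract (z - s) ≤ Int.fract (t - s) → arcMem Au Lu z)
    (hm0 : 0 < Int.fract (m - s)) (hmt : Int.fract (m - s) < Int.fract (t - s))
    (hmB : arcMem Bv Lv m) (hsB : ¬ arcMem Bv Lv s) (htB : ¬ arcMem Bv Lv t) :
    False := by
  have hτ1 : Int.fract (t - s) < 1 := Int.fract_lt_one _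
  have hsubset : arcSet Bv Lv ⊆ arcSet Au Lu := by
    intro z hzB'
    have hzB : arcMem Bv Lv z := hzB'
    show arcMem Au Lu z
    rcases le_or_gt (Int.fract (z - s)) (Int.fract (t - s)) with hζτ | hζτ
    · exact hseg z hζτ
    · exfalso
      have hζ1 : Int.fract (z - s) < 1 := Int.fract_lt_one _
      have hζ0 : 0 < Int.fract (z - s) := by linarith
      rcases seg hmB hzB with hL | hR
      · -- t in segment m → z
        apply htB
        apply hL t
        have h1 : Int.fract (t - m) = Int.fract (t - s) - Int.fract (m - s) := by
          rw [show t - m = (t - s) - (m - s) by ring, fract_sub_fract,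
            Int.fract_eq_self.mpr ⟨by linarith, by linarith⟩]
        have h2 : Int.fract (z - m) = Int.fract (z - s) - Int.fract (m - s) := by
          rw [show z - m = (z - s) - (m - s) by ring, fract_sub_fract,
            Int.fract_eq_self.mpr ⟨by linarith, by linarith⟩]
        rw [h1, h2]
        linarith
      · -- s in segment z → m
        apply hsB
        apply hR s
        have hne : Int.fract (z - s) ≠ 0 := by linarith
        have h1 : Int.fract (s - z) = 1 - Int.fract (z - s) := by
          rw [show s - z = -(z - s) by ring, Int.fract_neg hne]
        have h2 : Int.fract (m - z) = Int.fract (m - s) - Int.fract (z - s) + 1 := by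
          rw [show m - z = (m - s) - (z - s) by ring, fract_sub_fract]
          exact fract_neg_small _ (by linarith) (by linarith)
        rw [h1, h2]
        linarith
  exact hproper1 ⟨hsubset, fun hback => hsB (hback hs)⟩

end S16

namespace S16

theorem fwd_dir {V : Type*} [Fintype V] (E : V → V → Prop)
    (hirr : ∀ v, ¬ E v v) (horient : Oriented E)
    (h : IsProperCACatchDigraph E) :
    ∃ σ : Fin (Fintype.card V) ≃ V,
      ∀ i j k l : Fin (Fintype.card V), Cyc4 i j k l →
        E (σ i) (σ k) →
          (E (σ i) (σ j) ∧ E (σ j) (σ k)) ∨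
          (E (σ i) (σ l) ∧ E (σ l) (σ k)) := by
  classical
  obtain ⟨a, ℓ, p, hown, hproper, hedge⟩ := h
  set q : V → ℝ := fun v => Int.fract (p v) with hq
  have hq0 : ∀ v, 0 ≤ q v := fun v => Int.fract_nonneg _
  have hq1 : ∀ v, q v < 1 := fun v => Int.fract_lt_one _
  have harc_congr : ∀ (a' l' : ℝ) (x y : V), q x = q y →
      (arcMem a' l' (p x) ↔ arcMem a' l' (p y)) := by
    intro a' l' x y hxy
    show Int.fract (p x - a') ≤ l' ↔ Int.fract (p y - a') ≤ l'
    have : Int.fract (p x - a') = Int.fract (p y - a') := by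
      rw [fract_sub_fract (p x) a', fract_sub_fract (p y) a']
      rw [hq] at hxy
      simp only at hxy
      rw [hxy]
    rw [this]
  have hqinj : Function.Injective q := by
    intro x y hxy
    by_contra hne
    have h1 : E x y := (hedge x y).mpr ⟨hne, (harc_congr _ _ x y hxy).mp (hown x)⟩
    have h2 : E y x := (hedge y x).mpr ⟨fun e => hne e.symm,
      (harc_congr _ _ y x hxy.symm).mp (hown y)⟩
    exact horient x y h1 h2
  letI : LinearOrder V := LinearOrder.lift' q hqinj
  have hltV : ∀ x y : V, x < y ↔ q x < q y := by
    intro x y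
    rw [lt_iff_le_not_ge]
    change (q x ≤ q y ∧ ¬ q y ≤ q x) ↔ _
    rw [← lt_iff_le_not_ge]
  set σiso := Fintype.orderIsoFinOfCardEq V rfl with hσiso
  refine ⟨σiso.toEquiv, ?_⟩
  intro i j k l hcyc hEik
  set u := σiso.toEquiv i
  set v := σiso.toEquiv j
  set w := σiso.toEquiv k
  set x := σiso.toEquiv l
  have hmono : ∀ i' j' : Fin (Fintype.card V), i' < j' →
      q (σiso.toEquiv i') < q (σiso.toEquiv j') := by
    intro i' j' hij
    rw [← hltV]
    exact σiso.lt_iff_lt.mpr hij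
  -- δ values
  set δuv := Int.fract (p v - p u) with hδuv
  set δuw := Int.fract (p w - p u) with hδuw
  set δux := Int.fract (p x - p u) with hδux
  have hδval_lt : ∀ y z : V, q y < q z → Int.fract (p z - p y) = q z - q y := by
    intro y z hyz
    rw [fract_sub_fract]
    exact Int.fract_eq_self.mpr ⟨by linarith [hq0 y, hq0 z], by linarith [hq1 z, hq0 y]⟩
  have hδval_gt : ∀ y z : V, q z < q y → Int.fract (p z - p y) = q z - q y + 1 := by
    intro y z hyz
    rw [fract_sub_fract]
    exact fract_neg_small _ (by linarith [hq0 z, hq1 y]) (by linarith)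
  have hchain : 0 < δuv ∧ δuv < δuw ∧ δuw < δux ∧ δux < 1 := by
    have b0u := hq0 u; have b0v := hq0 v; have b0w := hq0 w; have b0x := hq0 x
    have b1u := hq1 u; have b1v := hq1 v; have b1w := hq1 w; have b1x := hq1 x
    rcases hcyc with ⟨ha, hb, hc'⟩ | ⟨ha, hb, hc'⟩ | ⟨ha, hb, hc'⟩ | ⟨ha, hb, hc'⟩
    · have q1 := hmono _ _ ha; have q2 := hmono _ _ hb; have q3 := hmono _ _ hc'
      rw [hδuv, hδuw, hδux, hδval_lt u v (by linarith), hδval_lt u w (by linarith),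
        hδval_lt u x (by linarith)]
      refine ⟨by linarith, by linarith, by linarith, by linarith⟩
    · -- j < k, k < l, l < i : q v < q w < q x < q u
      have q1 := hmono _ _ ha; have q2 := hmono _ _ hb; have q3 := hmono _ _ hc'
      rw [hδuv, hδuw, hδux, hδval_gt u v (by linarith), hδval_gt u w (by linarith),
        hδval_gt u x (by linarith)]
      refine ⟨by linarith, by linarith, by linarith, by linarith⟩
    · -- k < l, l < i, i < j : q w < q x < q u < q v
      have q1 := hmono _ _ ha; have q2 := hmono _ _ hb; have q3 := hmono _ _ hc'
      rw [hδuv, hδuw, hδux, hδval_lt u v (by linarith), hδval_gt u w (by linarith),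
        hδval_gt u x (by linarith)]
      refine ⟨by linarith, by linarith, by linarith, by linarith⟩
    · -- l < i, i < j, j < k : q x < q u < q v < q w
      have q1 := hmono _ _ ha; have q2 := hmono _ _ hb; have q3 := hmono _ _ hc'
      rw [hδuv, hδuw, hδux, hδval_lt u v (by linarith), hδval_lt u w (by linarith),
        hδval_gt u x (by linarith)]
      refine ⟨by linarith, by linarith, by linarith, by linarith⟩
  obtain ⟨hd1, hd2, hd3, hd4⟩ := hchain
  have hne_uv : u ≠ v := by
    intro e; rw [hδuv, ← e, sub_self, Int.fract_zero] at hd1; exact lt_irrefl _ hd1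
  have hne_uw : u ≠ w := by
    intro e; rw [hδuw, ← e, sub_self, Int.fract_zero] at hd2; linarith
  have hne_ux : u ≠ x := by
    intro e; rw [hδux, ← e, sub_self, Int.fract_zero] at hd3; linarith
  have hne_vw : v ≠ w := by
    intro e; rw [e] at hδuv; rw [hδuv] at hd2; rw [hδuw] at hd2; exact lt_irrefl _ hd2
  have hne_xw : x ≠ w := by
    intro e; rw [e] at hδux; rw [hδux] at hd3; rw [hδuw] at hd3; exact lt_irrefl _ hd3
  have hInuw : arcMem (a u) (ℓ u) (p w) := ((hedge u w).mp hEik).2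
  rcases seg (hown u) hInuw with hs1 | hs2
  · -- arc u contains the segment from p u to p w : v case
    left
    have hmemv : arcMem (a u) (ℓ u) (p v) := hs1 (p v) (by rw [← hδuv, ← hδuw]; linarith)
    have hEuv : E u v := (hedge u v).mpr ⟨hne_uv, hmemv⟩
    refine ⟨hEuv, ?_⟩
    by_contra hnvw
    have hnm_vw : ¬ arcMem (a v) (ℓ v) (p w) := fun hm =>
      hnvw ((hedge v w).mpr ⟨hne_vw, hm⟩)
    have hnm_vu : ¬ arcMem (a v) (ℓ v) (p u) := fun hm =>
      horient u v hEuv ((hedge v u).mpr ⟨fun e => hne_uv e.symm, hm⟩)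
    exact contain (hproper v u) (hown u) hs1
      (by rw [← hδuv]; exact hd1) (by rw [← hδuv, ← hδuw]; exact hd2)
      (hown v) hnm_vu hnm_vw
  · -- arc u contains the segment from p w to p u : x case
    right
    have hwu : Int.fract (p u - p w) = 1 - δuw := by
      rw [show p u - p w = -(p w - p u) by ring, Int.fract_neg (by rw [← hδuw]; linarith)]
    have hwx : Int.fract (p x - p w) = δux - δuw := by
      rw [show p x - p w = (p x - p u) - (p w - p u) by ring, fract_sub_fract,
        ← hδux, ← hδuw]
      exact Int.fract_eq_self.mpr ⟨by linarith, by linarith⟩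
    have hmemx : arcMem (a u) (ℓ u) (p x) := hs2 (p x) (by rw [hwu, hwx]; linarith)
    have hEux : E u x := (hedge u x).mpr ⟨hne_ux, hmemx⟩
    refine ⟨hEux, ?_⟩
    by_contra hnxw
    have hnm_xw : ¬ arcMem (a x) (ℓ x) (p w) := fun hm =>
      hnxw ((hedge x w).mpr ⟨hne_xw, hm⟩)
    have hnm_xu : ¬ arcMem (a x) (ℓ x) (p u) := fun hm =>
      horient u x hEux ((hedge x u).mpr ⟨fun e => hne_ux e.symm, hm⟩)
    exact contain (hproper x u) hInuw hs2
      (by rw [hwx]; linarith) (by rw [hwx, hwu]; linarith)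
      (hown x) hnm_xw hnm_xu

end S16

namespace S16

theorem rev_dir {V : Type*} [Fintype V] (E : V → V → Prop)
    (hirr : ∀ v, ¬ E v v) (horient : Oriented E)
    (h : ∃ σ : Fin (Fintype.card V) ≃ V,
      ∀ i j k l : Fin (Fintype.card V), Cyc4 i j k l →
        E (σ i) (σ k) →
          (E (σ i) (σ j) ∧ E (σ j) (σ k)) ∨
          (E (σ i) (σ l) ∧ E (σ l) (σ k))) :
    IsProperCACatchDigraph E := by
  classical
  obtain ⟨σ, hσ⟩ := h
  rcases isEmpty_or_nonempty V with hV | hV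
  · exact ⟨fun _ => 0, fun _ => 0, fun _ => 0,
      fun v => (IsEmpty.false v).elim, fun u => (IsEmpty.false u).elim,
      fun u => (IsEmpty.false u).elim⟩
  have hn : 0 < Fintype.card V := Fintype.card_pos
  haveI : NeZero (Fintype.card V) := ⟨by omega⟩
  obtain ⟨s, r, hP1, hP2, hP3⟩ :=
    comb_main (F := fun i j => E (σ i) (σ j))
      (fun i j h1 h2 => horient _ _ h1 h2)
      (fun i j k l hc he => hσ i j k l hc he)
  obtain ⟨A, L, P, hmem, hproper⟩ := real_phase s r hP1 hP3
  refine ⟨fun v => A (σ.symm v), fun v => L (σ.symm v), fun v => P (σ.symm v),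
    ?_, ?_, ?_⟩
  · intro v
    exact (hmem _ _).mpr ((hP2 (σ.symm v) (σ.symm v)).mp (Or.inr rfl))
  · intro u v
    exact hproper _ _
  · intro u v
    constructor
    · intro hE
      have hne : u ≠ v := fun e => hirr u (e ▸ hE)
      refine ⟨hne, ?_⟩
      have hFuv : E (σ (σ.symm u)) (σ (σ.symm v)) := by
        rwa [Equiv.apply_symm_apply, Equiv.apply_symm_apply]
      exact (hmem _ _).mpr ((hP2 _ _).mp (Or.inl hFuv))
    · rintro ⟨hne, hm⟩
      have hT := (hP2 (σ.symm u) (σ.symm v)).mpr ((hmem _ _).mp hm)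
      rcases hT with hFuv | heq
      · have h1 : E (σ (σ.symm u)) (σ (σ.symm v)) := hFuv
        rwa [Equiv.apply_symm_apply, Equiv.apply_symm_apply] at h1
      · exact absurd (σ.symm.injective heq).symm hne

end S16

/-- an oriented digraph is an oriented proper circular-arc catch
digraph iff there is a circular vertex ordering such that whenever u, v, w, x
occur in this cyclic order and uw is an edge, either uv and vw are edges, or
ux and xw are edges. -/
theorem stmt_16 {V : Type*} [Fintype V] (E : V → V → Prop)
    (hirr : ∀ v, ¬ E v v) (horient : Oriented E) :
    IsProperCACatchDigraph E ↔
      ∃ σ : Fin (Fintype.card V) ≃ V,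
        ∀ i j k l : Fin (Fintype.card V), Cyc4 i j k l →
          E (σ i) (σ k) →
            (E (σ i) (σ j) ∧ E (σ j) (σ k)) ∨
            (E (σ i) (σ l) ∧ E (σ l) (σ k)) := by
  constructor
  · exact S16.fwd_dir E hirr horient
  · exact S16.rev_dir E hirr horient
end

section
/- Let G be an oriented digraph admitting a circular vertex ordering σ such that for all u <_σ v <_σ w <_σ x, if uw ∈ E then uv ∈ E and vw ∈ E, or ux ∈ E and xw ∈ E. Then the augmented adjacency matrix of G, with rows and columns both arranged according to σ, satisfies the circular ones property along both rows and columns. -/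
def sval (n A B : ℕ) : ℕ := if B ≤ A then A - B else A + n - B

lemma fin_sub_val {n : ℕ} (a b : Fin n) :
    (a - b).val = if b.val ≤ a.val then a.val - b.val else a.val + n - b.val := by
  have ha := a.isLt; have hb := b.isLt
  rw [Fin.sub_def]
  simp only
  split_ifs with h
  · have e : n - b.val + a.val = n + (a.val - b.val) := by omega
    rw [e, Nat.add_mod_left, Nat.mod_eq_of_lt (by omega)]
  · rw [Nat.mod_eq_of_lt (by omega)]
    omega

lemma fin_sub_sval {n : ℕ} (a b : Fin n) : (a - b).val = sval n a.val b.val :=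
  fin_sub_val a b

lemma cyc4_iff {n : ℕ} (i j k l : Fin n) :
    Cyc4 i j k l ↔ 0 < (j-i).val ∧ (j-i).val < (k-i).val ∧ (k-i).val < (l-i).val := by
  have hi := i.isLt; have hj := j.isLt; have hk := k.isLt; have hl := l.isLt
  simp only [Cyc4, Fin.lt_def, fin_sub_val]
  split_ifs <;> omega

-- pure nat arithmetic helpers
lemma nat1 (n A B D : ℕ) (hB : B < n) (h1 : A ≤ D) (h2 : D ≤ B) :
    sval n D A ≤ sval n B A := by unfold sval; split_ifs <;> omega

lemma nat2 (n A B D : ℕ) (hB : B < n) (hD : D < n) (hAB : A ≤ B)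
    (h1 : D ≠ A) (h2 : D ≠ B) (hle : sval n D A ≤ sval n B A) :
    A < D ∧ D < B := by unfold sval at hle; constructor <;> (split_ifs at hle <;> omega)

lemma nat3 (n A B D : ℕ) (hA0 : 0 < A) (hB : B < n) (h1 : A < D) (h2 : D < B) :
    0 < sval n D A ∧ sval n D A < sval n B A ∧ sval n B A < sval n 0 A := by
  unfold sval; split_ifs <;> omega

lemma natRowA (n dk dl dm dr : ℕ) (h0 : 0 < dk) (h1 : dk < dl) (h2 : dl < dm)
    (hm : dm < n) (hr : dr < n) (hc : dr < dk ∨ dm < dr) :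
    0 < sval n dk dr ∧ sval n dk dr < sval n dl dr ∧ sval n dl dr < sval n dm dr := by
  unfold sval; split_ifs <;> omega

lemma natRowB (n dk dl dm dr : ℕ) (h0 : 0 < dk) (h2 : dl < dm)
    (hm : dm < n) (hr : dr < n) (hc1 : dk < dr) (hc2 : dr < dm) :
    0 < sval n dm dr ∧ sval n dm dr < sval n 0 dr ∧ sval n 0 dr < sval n dk dr := by
  unfold sval; split_ifs <;> omega

lemma natColB (n dk dl dm dt : ℕ) (h0 : 0 < dk) (h1 : dk < dl) (h2 : dl < dm)
    (hm : dm < n) (ht : dt < n) (hc : dt < dk ∨ dm < dt) :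
    0 < sval n dm dl ∧ sval n dm dl < sval n dt dl ∧ sval n dt dl < sval n dk dl := by
  unfold sval; split_ifs <;> omega

lemma circblock_of_no_alt {n : ℕ} (S : Set (Fin n)) (i₀ : Fin n) (h₀ : i₀ ∈ S)
    (halt : ∀ j k l m : Fin n, Cyc4 j k l m → j ∈ S → k ∉ S → l ∈ S → m ∉ S → False) :
    CircBlock S := by
  haveI : NeZero n := ⟨i₀.pos.ne'⟩
  have hn : 0 < n := i₀.pos
  classical
  by_cases hu : ∀ x, x ∈ S
  · right
    refine ⟨0, ⟨n-1, by omega⟩, ?_⟩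
    ext x
    simp only [hu x, Set.mem_setOf_eq, sub_zero, true_iff, Fin.le_def]
    have := x.isLt; omega
  · push_neg at hu
    obtain ⟨c, hc⟩ := hu
    have hmemT : ∀ x : Fin n, x ∈ Finset.univ.filter (fun x => c + x ∈ S) ↔ c + x ∈ S := by
      intro x; simp
    have hTne : (Finset.univ.filter (fun x => c + x ∈ S)).Nonempty :=
      ⟨i₀ - c, (hmemT _).2 (by rw [show c + (i₀ - c) = i₀ by abel]; exact h₀)⟩
    obtain ⟨a', ha'⟩ : ∃ a', a' = (Finset.univ.filter (fun x => c + x ∈ S)).min' hTne := ⟨_, rfl⟩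
    obtain ⟨b', hb'⟩ : ∃ b', b' = (Finset.univ.filter (fun x => c + x ∈ S)).max' hTne := ⟨_, rfl⟩
    have haT : a' ∈ Finset.univ.filter (fun x => c + x ∈ S) := ha' ▸ Finset.min'_mem _ _
    have hbT : b' ∈ Finset.univ.filter (fun x => c + x ∈ S) := hb' ▸ Finset.max'_mem _ _
    have hmin : ∀ x ∈ Finset.univ.filter (fun x => c + x ∈ S), a' ≤ x := by
      intro x hx; rw [ha']; exact Finset.min'_le _ _ hx
    have hmax : ∀ x ∈ Finset.univ.filter (fun x => c + x ∈ S), x ≤ b' := by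
      intro x hx; rw [hb']; exact Finset.le_max' _ _ hx
    have haS : c + a' ∈ S := (hmemT _).1 haT
    have hbS : c + b' ∈ S := (hmemT _).1 hbT
    have hab : a'.val ≤ b'.val := hmin b' hbT
    have ha0 : 0 < a'.val := by
      rcases Nat.eq_zero_or_pos a'.val with h | h
      · exfalso; apply hc
        have : a' = 0 := Fin.ext (by simp [h])
        rwa [this, add_zero] at haS
      · exact h
    right
    refine ⟨c + a', c + b', ?_⟩
    ext x
    have e1 : x - (c + a') = (x - c) - a' := by abel
    have e2 : (c + b') - (c + a') = b' - a' := by abel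
    simp only [Set.mem_setOf_eq, e1, e2, Fin.le_def,
      fin_sub_sval (x - c) a', fin_sub_sval b' a']
    constructor
    · intro hxS
      have hdT : x - c ∈ Finset.univ.filter (fun x => c + x ∈ S) :=
        (hmemT _).2 (by rwa [show c + (x - c) = x by abel])
      exact nat1 n a'.val b'.val (x - c).val b'.isLt (hmin _ hdT) (hmax _ hdT)
    · intro hle
      by_contra hxS
      have hxc : c + (x - c) = x := by abel
      have hdT : x - c ∉ Finset.univ.filter (fun x => c + x ∈ S) := by
        intro hdT; exact hxS (by rw [← hxc]; exact (hmemT _).1 hdT)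
      have hda : (x - c).val ≠ a'.val := fun e => hdT (by rw [show x - c = a' from Fin.ext e]; exact haT)
      have hdb : (x - c).val ≠ b'.val := fun e => hdT (by rw [show x - c = b' from Fin.ext e]; exact hbT)
      obtain ⟨hAD, hDB⟩ := nat2 n a'.val b'.val (x - c).val b'.isLt (x - c).isLt hab hda hdb hle
      refine halt (c + a') (c + (x - c)) (c + b') c ?_ haS (by rwa [hxc]) hbS hc
      rw [cyc4_iff]
      have f1 : (c + (x - c)) - (c + a') = (x - c) - a' := by abel
      have f2 : (c + b') - (c + a') = b' - a' := by abel
      have f3 : c - (c + a') = (0 : Fin n) - a' := by abel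
      rw [f1, f2, f3, fin_sub_sval (x - c) a', fin_sub_sval b' a', fin_sub_sval 0 a', Fin.val_zero]
      exact nat3 n a'.val b'.val (x - c).val ha0 b'.isLt hAD hDB


/-- if an oriented digraph has a circular vertex ordering with the
four-point property, then its augmented adjacency matrix, with rows and columns
arranged by this ordering, has circular ones along both rows and columns. -/
theorem stmt_17 {V : Type*} [Fintype V] (E : V → V → Prop)
    (hirr : ∀ v, ¬ E v v) (horient : Oriented E)
    (σ : Fin (Fintype.card V) ≃ V)
    (h : ∀ i j k l : Fin (Fintype.card V), Cyc4 i j k l →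
        E (σ i) (σ k) →
          (E (σ i) (σ j) ∧ E (σ j) (σ k)) ∨
          (E (σ i) (σ l) ∧ E (σ l) (σ k))) :
    (∀ i, CircBlock {j | E (σ i) (σ j) ∨ σ i = σ j}) ∧
    (∀ j, CircBlock {i | E (σ i) (σ j) ∨ σ i = σ j}) := by
  constructor
  · intro r
    refine circblock_of_no_alt _ r (Or.inr rfl) ?_
    intro j k l m hcyc hj hk hl hm
    haveI : NeZero (Fintype.card V) := ⟨r.pos.ne'⟩
    rw [cyc4_iff] at hcyc
    obtain ⟨h0, h1, h2⟩ := hcyc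
    have hrk : r ≠ k := fun e => hk (Or.inr (congrArg σ e))
    have hrm : r ≠ m := fun e => hm (Or.inr (congrArg σ e))
    have hdk : (r - j).val ≠ (k - j).val :=
      fun e => hrk (sub_left_injective (Fin.ext e))
    have hdm : (r - j).val ≠ (m - j).val :=
      fun e => hrm (sub_left_injective (Fin.ext e))
    by_cases hcase : (k - j).val < (r - j).val ∧ (r - j).val < (m - j).val
    · -- middle case: quadruple (r, m, j, k)
      have hrj0 : 0 < (r - j).val := by omega
      have hrj : r ≠ j := by
        intro e; rw [e, sub_self, Fin.val_zero] at hrj0; omega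
      have hEj : E (σ r) (σ j) :=
        hj.resolve_right (fun e => hrj (σ.injective e))
      have hcyc2 : Cyc4 r m j k := by
        rw [cyc4_iff]
        have g1 : m - r = (m - j) - (r - j) := by abel
        have g2 : j - r = (0 : Fin _) - (r - j) := by abel
        have g3 : k - r = (k - j) - (r - j) := by abel
        rw [g1, g2, g3, fin_sub_sval (m - j) (r - j), fin_sub_sval 0 (r - j),
          fin_sub_sval (k - j) (r - j), Fin.val_zero]
        exact natRowB _ _ _ _ _ h0 h2 (m - j).isLt (r - j).isLt hcase.1 hcase.2
      rcases h r m j k hcyc2 hEj with ⟨hE, _⟩ | ⟨hE, _⟩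
      · exact hm (Or.inl hE)
      · exact hk (Or.inl hE)
    · have hcase' : (r - j).val < (k - j).val ∨ (m - j).val < (r - j).val := by omega
      have hrl : r ≠ l := by intro e; rw [e] at hcase' hdk hdm; omega
      have hEl : E (σ r) (σ l) :=
        hl.resolve_right (fun e => hrl (σ.injective e))
      have hcyc2 : Cyc4 r k l m := by
        rw [cyc4_iff]
        have g1 : k - r = (k - j) - (r - j) := by abel
        have g2 : l - r = (l - j) - (r - j) := by abel
        have g3 : m - r = (m - j) - (r - j) := by abel
        rw [g1, g2, g3, fin_sub_sval (k - j) (r - j), fin_sub_sval (l - j) (r - j),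
          fin_sub_sval (m - j) (r - j)]
        exact natRowA _ _ _ _ _ h0 h1 h2 (m - j).isLt (r - j).isLt hcase'
      rcases h r k l m hcyc2 hEl with ⟨hE, _⟩ | ⟨hE, _⟩
      · exact hk (Or.inl hE)
      · exact hm (Or.inl hE)
  · intro t
    refine circblock_of_no_alt _ t (Or.inr rfl) ?_
    intro j k l m hcyc hj hk hl hm
    haveI : NeZero (Fintype.card V) := ⟨t.pos.ne'⟩
    rw [cyc4_iff] at hcyc
    obtain ⟨h0, h1, h2⟩ := hcyc
    have htk : t ≠ k := fun e => hk (Or.inr (congrArg σ e.symm))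
    have htm : t ≠ m := fun e => hm (Or.inr (congrArg σ e.symm))
    have hdk : (t - j).val ≠ (k - j).val :=
      fun e => htk (sub_left_injective (Fin.ext e))
    have hdm : (t - j).val ≠ (m - j).val :=
      fun e => htm (sub_left_injective (Fin.ext e))
    by_cases hcase : (k - j).val < (t - j).val ∧ (t - j).val < (m - j).val
    · -- quadruple (j, k, t, m)
      have htj : j ≠ t := by
        intro e; rw [← e, sub_self, Fin.val_zero] at hcase; omega
      have hEj : E (σ j) (σ t) :=
        hj.resolve_right (fun e => htj (σ.injective e))
      have hcyc2 : Cyc4 j k t m := by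
        rw [cyc4_iff]; exact ⟨h0, hcase.1, hcase.2⟩
      rcases h j k t m hcyc2 hEj with ⟨_, hE⟩ | ⟨_, hE⟩
      · exact hk (Or.inl hE)
      · exact hm (Or.inl hE)
    · have hcase' : (t - j).val < (k - j).val ∨ (m - j).val < (t - j).val := by omega
      have hlt : l ≠ t := by intro e; rw [e] at h1 h2; omega
      have hEl : E (σ l) (σ t) :=
        hl.resolve_right (fun e => hlt (σ.injective e))
      have hcyc2 : Cyc4 l m t k := by
        rw [cyc4_iff]
        have g1 : m - l = (m - j) - (l - j) := by abel
        have g2 : t - l = (t - j) - (l - j) := by abel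
        have g3 : k - l = (k - j) - (l - j) := by abel
        rw [g1, g2, g3, fin_sub_sval (m - j) (l - j), fin_sub_sval (t - j) (l - j),
          fin_sub_sval (k - j) (l - j)]
        exact natColB _ _ _ _ _ h0 h1 h2 (m - j).isLt (t - j).isLt hcase'
      rcases h l m t k hcyc2 hEl with ⟨_, hE⟩ | ⟨_, hE⟩
      · exact hm (Or.inl hE)
      · exact hk (Or.inl hE)
end
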